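/- arXiv:0906.2080 — 4 statements merged into one kernel-verified Lean document; each statement's English description precedes it below -/
import Mathlib

section
/- Let $m \in \mathbb{N}$, $p \in (0,1)$, and let $b_{m,p}(k) = \binom{m}{k} p^k (1-p)^{m-k}$ denote the binomial probability mass function. If $r$ is an integer with $r > mp$, then $\sum_{k=r}^{m} b_{m,p}(k) \le b_{m,p}(r) \cdot \frac{r(1-p)}{r - mp}$. -/
open Finset

/-- Binomial pmf: `b m p k = C(m,k) p^k (1-p)^(m-k)`. -/
noncomputable def binomPMF (m : ℕ) (p : ℝ) (k : ℕ) : ℝ :=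
  (m.choose k : ℝ) * p ^ k * (1 - p) ^ (m - k)

lemma binomPMF_nonneg (m : ℕ) (p : ℝ) (hp0 : 0 < p) (hp1 : p < 1) (k : ℕ) :
    0 ≤ binomPMF m p k := by
  have h1 : (0:ℝ) ≤ 1 - p := by linarith
  exact mul_nonneg (mul_nonneg (by positivity) (by positivity)) (pow_nonneg h1 _)

/-- Binomial tail bound: if `r > m p` then
`∑_{k=r}^m b_{m,p}(k) ≤ b_{m,p}(r) · r(1-p)/(r - mp)`. -/
theorem binomial_tail_bound (m : ℕ) (p : ℝ) (hp0 : 0 < p) (hp1 : p < 1)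
    (r : ℕ) (hr : (m : ℝ) * p < r) :
    ∑ k ∈ Finset.Icc r m, binomPMF m p k ≤
      binomPMF m p r * ((r : ℝ) * (1 - p) / ((r : ℝ) - (m : ℝ) * p)) := by
  have hp1' : (0:ℝ) < 1 - p := by linarith
  have hrpos : (0:ℝ) < r := lt_of_le_of_lt (by positivity) hr
  have hden : (0:ℝ) < (r : ℝ) - (m : ℝ) * p := by linarith
  rcases le_or_gt r m with hrm | hrm
  · -- main case r ≤ m
    set q : ℝ := ((m : ℝ) - r) * p / ((r : ℝ) * (1 - p)) with hq
    have hrm' : (0:ℝ) ≤ (m : ℝ) - r := by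
      have := Nat.cast_le (α := ℝ) |>.mpr hrm; linarith
    have hq0 : 0 ≤ q := by positivity
    have hq1 : q < 1 := by
      rw [hq, div_lt_one (by positivity)]
      nlinarith
    -- step inequality
    have step : ∀ k, r ≤ k → binomPMF m p (k+1) ≤ binomPMF m p k * q := by
      intro k hk
      rcases le_or_gt m k with hmk | hmk
      · have : m.choose (k+1) = 0 := Nat.choose_eq_zero_of_lt (by omega)
        have h1 : binomPMF m p (k+1) = 0 := by
          simp [binomPMF, this]
        rw [h1]
        exact mul_nonneg (binomPMF_nonneg m p hp0 hp1 k) hq0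
      · -- k < m
        have hkr : (r:ℝ) ≤ (k:ℝ) := Nat.cast_le.mpr hk
        have hkm : (k:ℝ) + 1 ≤ (m:ℝ) := by exact_mod_cast Nat.succ_le_of_lt hmk
        have hid : (m.choose (k+1) : ℝ) * ((k:ℝ)+1) = (m.choose k : ℝ) * ((m:ℝ) - k) := by
          have h2 : ((m.choose (k+1) * (k+1) : ℕ) : ℝ) = ((m.choose k * (m - k) : ℕ) : ℝ) :=
            congrArg _ (Nat.choose_succ_right_eq m k)
          push_cast [Nat.cast_sub hmk.le] at h2
          linarith [h2]
        have hpowsub : m - (k+1) + 1 = m - k := by omega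
        have hpow : (1 - p) ^ (m - k) = (1 - p) ^ (m - (k+1)) * (1 - p) := by
          rw [← pow_succ, hpowsub]
        -- (k+1)(1-p) * b(k+1) = (m-k) p * b(k)
        have key : binomPMF m p (k+1) * (((k:ℝ)+1) * (1 - p)) =
            binomPMF m p k * (((m:ℝ) - k) * p) := by
          unfold binomPMF
          rw [hpow]
          linear_combination (p^(k+1) * (1-p)^(m-(k+1)) * (1-p)) * hid
        have hbk : 0 ≤ binomPMF m p k := binomPMF_nonneg m p hp0 hp1 k
        have hpos : (0:ℝ) < ((k:ℝ)+1) * (1 - p) := by positivity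
        rw [← mul_le_mul_iff_left₀ hpos, key]
        have hqval : binomPMF m p k * q * (((k:ℝ)+1) * (1 - p)) =
            binomPMF m p k * (((m:ℝ) - r) * p * ((k:ℝ)+1) / r) := by
          rw [hq]; field_simp
        rw [hqval]
        apply mul_le_mul_of_nonneg_left _ hbk
        rw [le_div_iff₀ hrpos]
        have h5 : (r:ℝ) * ((m:ℝ) + 1) ≤ (m:ℝ) * ((k:ℝ) + 1) := by
          nlinarith [mul_le_mul_of_nonneg_left hkr (show (0:ℝ) ≤ (m:ℝ) from Nat.cast_nonneg m)]
        nlinarith [mul_le_mul_of_nonneg_left h5 hp0.le]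
    -- b(k) ≤ b(r) * q^(k-r)
    have bound : ∀ k, r ≤ k → binomPMF m p k ≤ binomPMF m p r * q ^ (k - r) := by
      intro k hk
      induction k, hk using Nat.le_induction with
      | base => simp
      | succ n hn ih =>
        calc binomPMF m p (n+1) ≤ binomPMF m p n * q := step n hn
          _ ≤ (binomPMF m p r * q ^ (n - r)) * q :=
              mul_le_mul_of_nonneg_right ih hq0
          _ = binomPMF m p r * q ^ (n + 1 - r) := by
              rw [mul_assoc, ← pow_succ, Nat.sub_add_comm hn]
    have hbr : 0 ≤ binomPMF m p r := binomPMF_nonneg m p hp0 hp1 r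
    calc ∑ k ∈ Finset.Icc r m, binomPMF m p k
        ≤ ∑ k ∈ Finset.Icc r m, binomPMF m p r * q ^ (k - r) := by
          apply Finset.sum_le_sum
          intro k hk
          exact bound k (Finset.mem_Icc.mp hk).1
      _ = binomPMF m p r * ∑ k ∈ Finset.Icc r m, q ^ (k - r) := by
          rw [Finset.mul_sum]
      _ = binomPMF m p r * ∑ j ∈ Finset.range (m + 1 - r), q ^ j := by
          congr 1
          rw [← Finset.Ico_add_one_right_eq_Icc, Finset.sum_Ico_eq_sum_range]
          exact Finset.sum_congr rfl fun j _ => by rw [Nat.add_sub_cancel_left]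
      _ ≤ binomPMF m p r * (1 / (1 - q)) := by
          apply mul_le_mul_of_nonneg_left _ hbr
          have h1q : (0:ℝ) < 1 - q := by linarith
          rw [le_div_iff₀ h1q]
          have hg := geom_sum_mul q (m + 1 - r)
          nlinarith [pow_nonneg hq0 (m + 1 - r)]
      _ = binomPMF m p r * ((r : ℝ) * (1 - p) / ((r : ℝ) - (m : ℝ) * p)) := by
          congr 1
          have h1q : (0:ℝ) < 1 - q := by linarith
          rw [div_eq_div_iff h1q.ne' hden.ne', hq]
          field_simp
          ring
  · -- r > m : sum empty, RHS zero
    rw [Finset.Icc_eq_empty (by omega), Finset.sum_empty]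
    have : m.choose r = 0 := Nat.choose_eq_zero_of_lt hrm
    simp [binomPMF, this]
end

section
/- Let $Z_1, \dots, Z_n$ be (possibly dependent) $\{0,1\}$-valued random variables, $S_n = \sum_{t=1}^n Z_t$, and let $Y$ be Poisson distributed with mean $\lambda = \sum_{t=1}^n \mathbb{E} Z_t$. Then $\sup_{A \subset \mathbb{Z}_+} |\mathbb{P}(S_n \in A) - \mathbb{P}(Y \in A)| \le \sum_{t=1}^n (\mathbb{E} Z_t)^2 + \sum_{t=1}^n \mathbb{E}\, |\mathbb{E}[Z_t \mid Z_1, \dots, Z_{t-1}] - \mathbb{E} Z_t|$. -/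
open MeasureTheory ProbabilityTheory Finset

/-- Poisson probability mass function with mean `r`. -/
noncomputable def poisPMF (r : ℝ) (k : ℕ) : ℝ :=
  Real.exp (-r) * r ^ k / (k.factorial : ℝ)

lemma poisPMF_nonneg {r : ℝ} (hr : 0 ≤ r) (k : ℕ) : 0 ≤ poisPMF r k := by
  unfold poisPMF
  positivity

lemma summable_poisPMF (r : ℝ) : Summable (poisPMF r) := by
  unfold poisPMF
  simp_rw [mul_div_assoc]
  exact (Real.summable_pow_div_factorial r).mul_left _

lemma tsum_poisPMF (r : ℝ) : ∑' k, poisPMF r k = 1 := by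
  unfold poisPMF
  simp_rw [mul_div_assoc]
  rw [tsum_mul_left]
  have : ∑' k : ℕ, r ^ k / (k.factorial : ℝ) = Real.exp r := by
    rw [Real.exp_eq_exp_ℝ, NormedSpace.exp_eq_tsum_div]
  rw [this, ← Real.exp_add]
  simp

lemma poisPMF_conv (a b : ℝ) (k : ℕ) :
    poisPMF (a + b) k = ∑ j ∈ Finset.range (k + 1), poisPMF a j * poisPMF b (k - j) := by
  unfold poisPMF
  rw [add_pow]
  rw [Finset.mul_sum, Finset.sum_div]
  refine Finset.sum_congr rfl fun j hj => ?_
  have hjk : j ≤ k := Nat.lt_succ_iff.mp (Finset.mem_range.mp hj)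
  have hfact : ((k.choose j : ℝ)) = (k.factorial : ℝ) / ((j.factorial : ℝ) * ((k - j).factorial : ℝ)) := by
    rw [eq_div_iff (by positivity)]
    have := Nat.choose_mul_factorial_mul_factorial hjk
    push_cast [← this]
    ring
  rw [neg_add, Real.exp_add, hfact]
  have h1 : (j.factorial : ℝ) ≠ 0 := by positivity
  have h2 : (((k-j).factorial : ℝ)) ≠ 0 := by positivity
  have h3 : ((k.factorial : ℝ)) ≠ 0 := by positivity
  field_simp

noncomputable def bernPMF (l : ℝ) : ℕ → ℝ :=
  fun k => if k = 0 then 1 - l else if k = 1 then l else 0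

lemma summable_bernPMF (l : ℝ) : Summable (bernPMF l) := by
  apply summable_of_ne_finset_zero (s := {0, 1})
  intro k hk
  simp only [Finset.mem_insert, Finset.mem_singleton] at hk
  push_neg at hk
  simp [bernPMF, hk.1, hk.2]

noncomputable def dPMF (l : ℝ) : ℕ → ℝ := fun k => |bernPMF l k - poisPMF l k|

lemma summable_dPMF (l : ℝ) : Summable (dPMF l) :=
  ((summable_bernPMF l).sub (summable_poisPMF l)).abs

lemma tsum_split2 {f : ℕ → ℝ} (hf : Summable f) :
    ∑' k, f k = f 0 + f 1 + ∑' k, f (k + 2) := by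
  rw [Summable.tsum_eq_zero_add hf, Summable.tsum_eq_zero_add ((summable_nat_add_iff 1).mpr hf), ← add_assoc]

lemma tsum_dPMF_le {l : ℝ} (h0 : 0 ≤ l) : ∑' k, dPMF l k ≤ 2 * l ^ 2 := by
  have hexp1 : Real.exp (-l) ≤ 1 := Real.exp_le_one_iff.mpr (by linarith)
  have hexp2 : 1 - l ≤ Real.exp (-l) := by
    have := Real.add_one_le_exp (-l); linarith
  have hp0 : poisPMF l 0 = Real.exp (-l) := by simp [poisPMF]
  have hp1 : poisPMF l 1 = Real.exp (-l) * l := by simp [poisPMF]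
  have hd0 : dPMF l 0 = Real.exp (-l) - (1 - l) := by
    show |bernPMF l 0 - poisPMF l 0| = _
    rw [hp0, show bernPMF l 0 = 1 - l from rfl, abs_of_nonpos (by linarith)]
    ring
  have hd1 : dPMF l 1 = l - Real.exp (-l) * l := by
    show |bernPMF l 1 - poisPMF l 1| = _
    rw [hp1, show bernPMF l 1 = l from rfl, abs_of_nonneg (by nlinarith)]
  have htail : ∑' k, dPMF l (k + 2) = 1 - poisPMF l 0 - poisPMF l 1 := by
    have heq : ∀ k, dPMF l (k + 2) = poisPMF l (k + 2) := by
      intro k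
      show |bernPMF l (k + 2) - poisPMF l (k + 2)| = _
      rw [show bernPMF l (k + 2) = 0 from rfl, zero_sub, abs_neg,
        abs_of_nonneg (poisPMF_nonneg h0 _)]
    rw [tsum_congr heq]
    have h2 := tsum_split2 (summable_poisPMF l)
    rw [tsum_poisPMF l] at h2
    linarith
  rw [tsum_split2 (summable_dPMF l), hd0, hd1, htail, hp0, hp1]
  nlinarith

lemma shift_summable {q : ℕ → ℝ} (hq : Summable q) :
    Summable (fun k => if k = 0 then 0 else q (k - 1) : ℕ → ℝ) := by
  rw [← summable_nat_add_iff 1]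
  simpa using hq

lemma tsum_shift {q : ℕ → ℝ} (hq : Summable q) :
    ∑' k, (if k = 0 then 0 else q (k - 1) : ℝ) = ∑' k, q k := by
  rw [Summable.tsum_eq_zero_add (shift_summable hq)]
  simp

lemma key_B {μ lam : ℝ} (hμ : 0 ≤ μ) (h0 : 0 ≤ lam) (h1 : lam ≤ 1)
    {c : ℕ → ℝ} (hc0 : ∀ k, 0 ≤ c k) (hc1 : ∀ k, c k ≤ 1) :
    |(∑' k, poisPMF μ k * ((1 - lam) * c k + lam * c (k + 1))) -
      ∑' k, poisPMF (μ + lam) k * c k| ≤ lam ^ 2 := by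
  set q := poisPMF μ with hq_def
  have hq : Summable q := summable_poisPMF μ
  have hqn : ∀ k, 0 ≤ q k := poisPMF_nonneg hμ
  set g : ℕ → ℝ := fun k => if k = 0 then 0 else q (k - 1) with hg_def
  have hg : Summable g := shift_summable hq
  set r : ℕ → ℝ := fun k => (1 - lam) * q k + lam * g k - poisPMF (μ + lam) k with hr_def
  have hr : Summable r :=
    (((hq.mul_left _).add (hg.mul_left _)).sub (summable_poisPMF _))
  -- |r k| ≤ convolution with dPMF
  have hr_conv : ∀ k, r k = ∑ j ∈ Finset.range (k + 1), q j * (bernPMF lam (k - j) - poisPMF lam (k - j)) := by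
    intro k
    have h1 : ∑ j ∈ Finset.range (k + 1), q j * bernPMF lam (k - j)
        = (1 - lam) * q k + lam * g k := by
      match k with
      | 0 => simp [bernPMF, hg_def]; ring
      | Nat.succ m =>
        rw [Finset.sum_range_succ, Finset.sum_range_succ]
        have hz : ∀ j ∈ Finset.range m, q j * bernPMF lam (m + 1 - j) = 0 := by
          intro j hj
          have hj' : j < m := Finset.mem_range.mp hj
          have : bernPMF lam (m + 1 - j) = 0 := by
            have h2 : m + 1 - j ≠ 0 := by omega
            have h3 : m + 1 - j ≠ 1 := by omega
            simp [bernPMF, h2, h3]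
          rw [this, mul_zero]
        rw [Finset.sum_eq_zero hz]
        have : m + 1 - m = 1 := by omega
        rw [this]
        simp [bernPMF, hg_def]
        ring
    simp_rw [mul_sub, Finset.sum_sub_distrib, h1, hq_def, ← poisPMF_conv]
    rfl
  have hr_abs : ∀ k, |r k| ≤ ∑ j ∈ Finset.range (k + 1), q j * dPMF lam (k - j) := by
    intro k
    rw [hr_conv k]
    refine (Finset.abs_sum_le_sum_abs _ _).trans ?_
    apply Finset.sum_le_sum
    intro j _
    rw [abs_mul, abs_of_nonneg (hqn j)]
    exact mul_le_mul_of_nonneg_left (le_refl _) (hqn j)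
  -- total: ∑' |r| ≤ 2 lam²
  have habs_summable : Summable (fun k => |r k|) := hr.abs
  have hnq : Summable (fun k => ‖q k‖) := by simp only [Real.norm_eq_abs]; exact hq.abs
  have hnd : Summable (fun k => ‖dPMF lam k‖) := by
    simp only [Real.norm_eq_abs]; exact (summable_dPMF lam).abs
  have hconv_summable : Summable (fun k => ∑ j ∈ Finset.range (k + 1), q j * dPMF lam (k - j)) :=
    summable_sum_mul_range_of_summable_norm' hnq hq hnd (summable_dPMF lam)
  have htsum_abs : ∑' k, |r k| ≤ 2 * lam ^ 2 := by
    calc ∑' k, |r k| ≤ ∑' k, ∑ j ∈ Finset.range (k + 1), q j * dPMF lam (k - j) :=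
          Summable.tsum_le_tsum hr_abs habs_summable hconv_summable
      _ = (∑' k, q k) * ∑' k, dPMF lam k := by
          rw [tsum_mul_tsum_eq_tsum_sum_range_of_summable_norm hnq hnd]
      _ ≤ 1 * (2 * lam ^ 2) := by
          rw [tsum_poisPMF]
          exact mul_le_mul_of_nonneg_left (tsum_dPMF_le h0) one_pos.le
      _ = 2 * lam ^ 2 := one_mul _
  -- ∑' r = 0
  have htsum_r : ∑' k, r k = 0 := by
    rw [hr_def]
    rw [Summable.tsum_sub ((hq.mul_left _).add (hg.mul_left _)) (summable_poisPMF _),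
      Summable.tsum_add (hq.mul_left _) (hg.mul_left _), tsum_mul_left, tsum_mul_left,
      tsum_shift hq, tsum_poisPMF, tsum_poisPMF]
    ring
  -- pos/neg parts
  set rp : ℕ → ℝ := fun k => max (r k) 0 with hrp_def
  set rm : ℕ → ℝ := fun k => max (-r k) 0 with hrm_def
  have hrp : Summable rp := habs_summable.of_nonneg_of_le (fun k => le_max_right _ _)
    (fun k => max_le (le_abs_self _) (abs_nonneg _))
  have hrm : Summable rm := habs_summable.of_nonneg_of_le (fun k => le_max_right _ _)
    (fun k => max_le (neg_le_abs _) (abs_nonneg _))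
  have hsum_pm : ∑' k, rp k + ∑' k, rm k = ∑' k, |r k| := by
    rw [← Summable.tsum_add hrp hrm]
    exact tsum_congr fun k => max_zero_add_max_neg_zero_eq_abs_self (r k)
  have hsub_pm : ∑' k, rp k - ∑' k, rm k = 0 := by
    rw [← Summable.tsum_sub hrp hrm, ← htsum_r]
    exact tsum_congr fun k => max_zero_sub_max_neg_zero_eq_self (r k)
  have hrp_le : ∑' k, rp k ≤ lam ^ 2 := by linarith
  have hrm_le : ∑' k, rm k ≤ lam ^ 2 := by linarith
  -- rewrite LHS as ∑' r k * c k
  have hsc : Summable (fun k => r k * c k) := by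
    apply habs_summable.of_norm_bounded
    intro k
    rw [Real.norm_eq_abs, abs_mul]
    calc |r k| * |c k| ≤ |r k| * 1 := by
          apply mul_le_mul_of_nonneg_left _ (abs_nonneg _)
          rw [abs_of_nonneg (hc0 k)]; exact hc1 k
      _ = |r k| := mul_one _
  have hLHS : (∑' k, q k * ((1 - lam) * c k + lam * c (k + 1))) -
      (∑' k, poisPMF (μ + lam) k * c k) = ∑' k, r k * c k := by
    have e1 : ∀ k, q k * ((1 - lam) * c k + lam * c (k + 1)) =
        (1 - lam) * (q k * c k) + lam * (q k * c (k + 1)) := fun k => by ring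
    have s1 : Summable (fun k => q k * c k) := by
      apply hq.of_norm_bounded
      intro k
      rw [Real.norm_eq_abs, abs_mul, abs_of_nonneg (hqn k)]
      calc q k * |c k| ≤ q k * 1 := by
            apply mul_le_mul_of_nonneg_left _ (hqn k)
            rw [abs_of_nonneg (hc0 k)]; exact hc1 k
        _ = q k := mul_one _
    have s2 : Summable (fun k => q k * c (k + 1)) := by
      apply hq.of_norm_bounded
      intro k
      rw [Real.norm_eq_abs, abs_mul, abs_of_nonneg (hqn k)]
      calc q k * |c (k + 1)| ≤ q k * 1 := by
            apply mul_le_mul_of_nonneg_left _ (hqn k)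
            rw [abs_of_nonneg (hc0 _)]; exact hc1 _
        _ = q k := mul_one _
    have s3 : Summable (fun k => g k * c k) := by
      apply hg.abs.of_norm_bounded
      intro k
      rw [Real.norm_eq_abs, abs_mul]
      calc |g k| * |c k| ≤ |g k| * 1 := by
            apply mul_le_mul_of_nonneg_left _ (abs_nonneg _)
            rw [abs_of_nonneg (hc0 k)]; exact hc1 k
        _ = |g k| := mul_one _
    have hgshift : ∑' k, g k * c k = ∑' k, q k * c (k + 1) := by
      rw [Summable.tsum_eq_zero_add s3]
      simp [hg_def]
    have s4 : Summable (fun k => poisPMF (μ + lam) k * c k) := by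
      apply (summable_poisPMF (μ + lam)).of_norm_bounded
      intro k
      have hpn : 0 ≤ poisPMF (μ + lam) k := poisPMF_nonneg (by linarith) k
      rw [Real.norm_eq_abs, abs_mul, abs_of_nonneg hpn]
      calc poisPMF (μ + lam) k * |c k| ≤ poisPMF (μ + lam) k * 1 := by
            apply mul_le_mul_of_nonneg_left _ hpn
            rw [abs_of_nonneg (hc0 k)]; exact hc1 k
        _ = _ := mul_one _
    have e2 : ∀ k, r k * c k = (1 - lam) * (q k * c k) + lam * (g k * c k)
        - poisPMF (μ + lam) k * c k := fun k => by show r k * c k = _; rw [hr_def]; ring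
    rw [tsum_congr e1, Summable.tsum_add (s1.mul_left _) (s2.mul_left _), tsum_mul_left, tsum_mul_left,
      ← hgshift, tsum_congr e2,
      Summable.tsum_sub ((s1.mul_left (1 - lam)).add (s3.mul_left lam)) s4,
      Summable.tsum_add (s1.mul_left _) (s3.mul_left _), tsum_mul_left, tsum_mul_left]
  have hup : ∑' k, r k * c k ≤ ∑' k, rp k := by
    apply Summable.tsum_le_tsum _ hsc hrp
    intro k
    show r k * c k ≤ max (r k) 0
    rcases le_or_gt 0 (r k) with h | h
    · calc r k * c k ≤ r k * 1 := by nlinarith [hc0 k, hc1 k]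
        _ = r k := mul_one _
        _ ≤ max (r k) 0 := le_max_left _ _
    · calc r k * c k ≤ 0 := mul_nonpos_of_nonpos_of_nonneg h.le (hc0 k)
        _ ≤ max (r k) 0 := le_max_right _ _
  have hlow : -∑' k, rm k ≤ ∑' k, r k * c k := by
    rw [← tsum_neg]
    apply Summable.tsum_le_tsum _ hrm.neg hsc
    intro k
    show -max (-r k) 0 ≤ r k * c k
    rcases le_or_gt 0 (r k) with h | h
    · rw [max_eq_right (by linarith), neg_zero]
      exact mul_nonneg h (hc0 k)
    · rw [max_eq_left (by linarith), neg_neg]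
      nlinarith [hc0 k, hc1 k]
  rw [hLHS, abs_le]
  exact ⟨by linarith, by linarith⟩


/-- Serfling's Poisson approximation theorem: for (possibly dependent)
`{0,1}`-valued random variables `Z 1, …, Z n` with sum `S`, and `Y` Poisson
with mean `λ = ∑ E[Z t]`, for every `A ⊆ ℤ₊`:
`|P(S ∈ A) - P(Y ∈ A)| ≤ ∑ (E Z t)² + ∑ E|E[Z t | Z 1,…,Z (t-1)] - E Z t|`. -/
theorem serfling_poisson_approximation
    {Ω : Type} [MeasurableSpace Ω] (P : Measure Ω) [IsProbabilityMeasure P]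
    (n : ℕ) (Z : ℕ → Ω → ℕ)
    (hZmeas : ∀ t, Measurable (Z t))
    (hZle : ∀ t ω, Z t ω ≤ 1)
    (A : Set ℕ) :
    |(P {ω | (∑ t ∈ Finset.Icc 1 n, Z t ω) ∈ A}).toReal -
        ∑' k : A, poisPMF (∑ t ∈ Finset.Icc 1 n, ∫ ω, (Z t ω : ℝ) ∂P) (k : ℕ)| ≤
      (∑ t ∈ Finset.Icc 1 n, (∫ ω, (Z t ω : ℝ) ∂P) ^ 2) +
      ∑ t ∈ Finset.Icc 1 n, ∫ ω,
        |(P[fun ω' => (Z t ω' : ℝ) |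
            MeasurableSpace.comap
              (fun ω' (i : Fin (t - 1)) => Z (i + 1) ω') inferInstance]) ω -
          ∫ ω', (Z t ω' : ℝ) ∂P| ∂P := by
  classical
  set lam : ℕ → ℝ := fun t => ∫ ω, (Z t ω : ℝ) ∂P with hlam_def
  set mm : ℕ → MeasurableSpace Ω := fun t => MeasurableSpace.comap
      (fun ω' (i : Fin (t - 1)) => Z (i + 1) ω') inferInstance with hmm_def
  set phat : ℕ → Ω → ℝ := fun t => P[fun ω' => (Z t ω' : ℝ) | mm t] with hphat_def
  set indA : ℕ → ℝ := fun m => if m ∈ A then 1 else 0 with hindA_def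
  set S : ℕ → Ω → ℕ := fun i ω => ∑ t' ∈ Finset.Icc 1 i, Z t' ω with hS_def
  set ρ : ℕ → ℝ := fun i => ∑ t' ∈ Finset.Icc (i + 1) n, lam t' with hρ_def
  set c : ℕ → ℕ → ℝ := fun i k => ∫ ω, indA (S i ω + k) ∂P with hc_def
  set DD : ℕ → ℝ := fun i => ∑' k, poisPMF (ρ i) k * c i k with hDD_def
  -- basic facts
  have hindA0 : ∀ m, 0 ≤ indA m := fun m => by rw [hindA_def]; dsimp only; split <;> norm_num
  have hindA1 : ∀ m, |indA m| ≤ 1 := fun m => by rw [hindA_def]; dsimp only; split <;> norm_num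
  have hIntBdd : ∀ (f : Ω → ℝ), Measurable f → (∀ ω, |f ω| ≤ 1) → Integrable f P := by
    intro f hf hb
    exact ⟨hf.aestronglyMeasurable,
      MeasureTheory.HasFiniteIntegral.of_bounded (C := 1) (ae_of_all _ fun ω => by
        rw [Real.norm_eq_abs]; exact hb ω)⟩
  have hint_le_one : ∀ (f : Ω → ℝ), Integrable f P → (∀ ω, f ω ≤ 1) → ∫ ω, f ω ∂P ≤ 1 := by
    intro f hf hb
    calc ∫ ω, f ω ∂P ≤ ∫ _, (1 : ℝ) ∂P := integral_mono hf (integrable_const 1) hb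
      _ = 1 := by simp
  have hSmeas : ∀ i, Measurable (S i) := fun i => Finset.measurable_sum _ (fun t _ => hZmeas t)
  have hindmeas : ∀ (g : ℕ → ℝ) (f : Ω → ℕ), Measurable f → Measurable (fun ω => g (f ω)) :=
    fun g f hf => (measurable_from_top (f := g)).comp hf
  have hzval : ∀ t ω, (Z t ω : ℝ) = 0 ∨ (Z t ω : ℝ) = 1 := by
    intro t ω
    rcases Nat.le_one_iff_eq_zero_or_eq_one.mp (hZle t ω) with h | h <;> simp [h]
  have hzbd : ∀ t ω, |(Z t ω : ℝ)| ≤ 1 := by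
    intro t ω; rcases hzval t ω with h | h <;> rw [h] <;> norm_num
  have hzint : ∀ t, Integrable (fun ω => (Z t ω : ℝ)) P := fun t =>
    hIntBdd _ ((measurable_from_top (f := fun m : ℕ => (m : ℝ))).comp (hZmeas t)) (hzbd t)
  have hlam0 : ∀ t, 0 ≤ lam t := fun t => integral_nonneg (fun ω => by positivity)
  have hlam1 : ∀ t, lam t ≤ 1 := by
    intro t
    exact hint_le_one _ (hzint t) (fun ω => by rcases hzval t ω with h | h <;> rw [h] <;> norm_num)
  have hρ0 : ∀ i, 0 ≤ ρ i := fun i => Finset.sum_nonneg (fun t _ => hlam0 t)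
  have hc0 : ∀ i k, 0 ≤ c i k := fun i k => integral_nonneg (fun ω => hindA0 _)
  have hc1 : ∀ i k, c i k ≤ 1 := fun i k =>
    hint_le_one _ (hIntBdd _ (hindmeas _ _ ((hSmeas i).add_const k)) (fun ω => hindA1 _))
      (fun ω => (le_abs_self _).trans (hindA1 _))
  have hcint : ∀ i k, Integrable (fun ω => indA (S i ω + k)) P := fun i k =>
    hIntBdd _ (hindmeas _ _ ((hSmeas i).add_const k)) (fun ω => hindA1 _)
  -- endpoints
  have hDDn : DD n = (P {ω | (∑ t ∈ Finset.Icc 1 n, Z t ω) ∈ A}).toReal := by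
    have hρn : ρ n = 0 := by
      rw [hρ_def]; dsimp only
      rw [Finset.Icc_eq_empty (by omega), Finset.sum_empty]
    have hpois : ∀ k, k ≠ 0 → poisPMF (ρ n) k * c n k = 0 := by
      intro k hk
      rw [hρn]
      unfold poisPMF
      rw [zero_pow hk]
      simp
    rw [hDD_def]
    dsimp only
    rw [tsum_eq_single 0 hpois, hρn]
    have h1 : poisPMF 0 0 = 1 := by unfold poisPMF; norm_num
    rw [h1, one_mul, hc_def]
    dsimp only
    have h2 : (fun ω => indA (S n ω + 0)) =
        Set.indicator {ω | S n ω ∈ A} (1 : Ω → ℝ) := by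
      funext ω
      rw [hindA_def]
      by_cases h : S n ω ∈ A
      · simp [Set.indicator_of_mem, h]
      · simp [Set.indicator_of_notMem, h]
    rw [h2]
    exact integral_indicator_one ((hSmeas n) (show MeasurableSet A from trivial))
  have hDD0 : DD 0 = ∑' k : A, poisPMF (∑ t ∈ Finset.Icc 1 n, lam t) (k : ℕ) := by
    have hS0 : ∀ ω, S 0 ω = 0 := by
      intro ω; rw [hS_def]; dsimp only
      rw [Finset.Icc_eq_empty (by omega), Finset.sum_empty]
    have hc0k : ∀ k, c 0 k = indA k := by
      intro k
      rw [hc_def]; dsimp only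
      have : (fun ω => indA (S 0 ω + k)) = fun _ => indA k := by
        funext ω; rw [hS0 ω, Nat.zero_add]
      rw [this, integral_const]
      simp
    have hρ00 : ρ 0 = ∑ t ∈ Finset.Icc 1 n, lam t := rfl
    rw [hDD_def]
    dsimp only
    rw [tsum_subtype A (fun k => poisPMF (∑ t ∈ Finset.Icc 1 n, lam t) k)]
    refine tsum_congr (fun k => ?_)
    rw [hc0k, hρ00, hindA_def]
    dsimp only
    by_cases h : k ∈ A
    · simp [Set.indicator_of_mem, h]
    · simp [Set.indicator_of_notMem, h]
  -- main step
  have step : ∀ t, 1 ≤ t → t ≤ n →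
      |DD t - DD (t - 1)| ≤ lam t ^ 2 + ∫ ω, |phat t ω - lam t| ∂P := by
    intro t ht1 htn
    obtain ⟨u, rfl⟩ : ∃ u, t = u + 1 := ⟨t - 1, by omega⟩
    simp only [Nat.add_sub_cancel]
    set l : ℝ := lam (u + 1) with hl_def
    set μ : ℝ := ρ (u + 1) with hμ_def
    set ph : Ω → ℝ := phat (u + 1) with hph_def
    set zt : Ω → ℝ := fun ω' => ((Z (u + 1) ω' : ℕ) : ℝ) with hzt_def
    have hl0 : 0 ≤ l := hlam0 _
    have hl1 : l ≤ 1 := hlam1 _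
    have hμ0 : 0 ≤ μ := hρ0 _
    set K : ℝ := ∫ ω, |ph ω - l| ∂P with hK_def
    -- sigma-algebra facts
    have hφmeas : Measurable (fun ω' (i : Fin (u + 1 - 1)) => Z (i + 1) ω') :=
      measurable_pi_lambda _ (fun i => hZmeas _)
    have hm : mm (u + 1) ≤ (inferInstance : MeasurableSpace Ω) := hφmeas.comap_le
    haveI hsf : SigmaFinite (P.trim hm) := inferInstance
    have hphat_int : Integrable ph P := integrable_condExp
    have hphl_int : Integrable (fun ω => ph ω - l) P := hphat_int.sub (integrable_const l)
    have hS_m : Measurable[mm (u + 1)] (S u) := by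
      have heq : S u = (fun v : Fin (u + 1 - 1) → ℕ => ∑ i, v i) ∘
          (fun ω' (i : Fin (u + 1 - 1)) => Z (i + 1) ω') := by
        funext ω
        show S u ω = ∑ i : Fin (u + 1 - 1), Z (i + 1) ω
        rw [hS_def]; dsimp only
        rw [Fin.sum_univ_eq_sum_range (fun i => Z (i + 1) ω) (u + 1 - 1), ← Finset.Ico_add_one_right_eq_Icc,
          Finset.sum_Ico_eq_sum_range]
        have h2 : u + 1 - 1 = u := by omega
        rw [h2]
        exact Finset.sum_congr rfl (fun i _ => by rw [Nat.add_comm])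
      rw [heq]
      exact (Finset.measurable_sum _ (fun i _ => measurable_pi_apply i)).comp
        (Measurable.of_comap_le le_rfl)
    have hSsucc : ∀ ω, S (u + 1) ω = S u ω + Z (u + 1) ω := by
      intro ω
      rw [hS_def]; dsimp only
      rw [Finset.sum_Icc_succ_top (by omega)]
    have hρsplit : ρ u = μ + l := by
      rw [hρ_def]; dsimp only
      have hset : Finset.Icc (u + 1) n = insert (u + 1) (Finset.Icc (u + 1 + 1) n) := by
        ext x
        simp only [Finset.mem_Icc, Finset.mem_insert]
        omega
      rw [hset, Finset.sum_insert (by simp only [Finset.mem_Icc]; omega)]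
      rw [hμ_def, hρ_def, hl_def]
      exact add_comm _ _
    -- per-k bound
    set Y : ℕ → ℝ := fun k => (1 - l) * c u k + l * c u (k + 1) with hY_def
    have hXYb : ∀ k, |c (u + 1) k - Y k| ≤ K := by
      intro k
      set w : Ω → ℝ := fun ω => indA (S u ω + k + 1) - indA (S u ω + k) with hw_def
      have hwmeas : Measurable w :=
        hindmeas (fun mv => indA (mv + k + 1) - indA (mv + k)) (S u) (hSmeas u)
      have hw1 : ∀ ω, |w ω| ≤ 1 := by
        intro ω
        rw [hw_def]
        have h1 := hindA0 (S u ω + k + 1)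
        have h2 := hindA0 (S u ω + k)
        have h3 := (abs_le.mp (hindA1 (S u ω + k + 1))).2
        have h4 := (abs_le.mp (hindA1 (S u ω + k))).2
        rw [abs_le]; constructor <;> dsimp only <;> linarith
      have hwint : Integrable w P := hIntBdd w hwmeas hw1
      have hztw_int : Integrable (fun ω => zt ω * w ω) P :=
        Integrable.bdd_mul hwint ((hzint (u + 1)).aestronglyMeasurable)
          (ae_of_all _ fun ω => by rw [Real.norm_eq_abs]; exact hzbd (u + 1) ω)
      have hwzt_int : Integrable (w * zt) P :=
        Integrable.bdd_mul (hzint (u + 1)) hwmeas.aestronglyMeasurable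
          (ae_of_all _ fun ω => by rw [Real.norm_eq_abs]; exact hw1 ω)
      have hw_sm : StronglyMeasurable[mm (u + 1)] w :=
        (((measurable_from_top
            (f := fun mv : ℕ => indA (mv + k + 1) - indA (mv + k))).comp
          hS_m).stronglyMeasurable)
      -- pointwise identity
      have h1 : ∀ ω, indA (S (u + 1) ω + k) = indA (S u ω + k) + zt ω * w ω := by
        intro ω
        rw [hSsucc ω]
        rcases Nat.le_one_iff_eq_zero_or_eq_one.mp (hZle (u + 1) ω) with h | h
        · rw [hzt_def]; dsimp only
          rw [h]
          push_cast
          rw [hw_def]; dsimp only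
          ring_nf
        · rw [hzt_def]; dsimp only
          rw [h]
          push_cast
          rw [hw_def]; dsimp only
          rw [show S u ω + 1 + k = S u ω + k + 1 by omega]
          ring
      have h2 : c (u + 1) k = c u k + ∫ ω, zt ω * w ω ∂P := by
        rw [hc_def]; dsimp only
        rw [integral_congr_ae (ae_of_all _ h1), integral_add (hcint u k) hztw_int]
      have h3 : ∫ ω, zt ω * w ω ∂P = ∫ ω, w ω * ph ω ∂P := by
        have e1 : (fun ω => zt ω * w ω) = (w * zt) := by
          funext ω; exact mul_comm _ _
        have hpull : P[w * zt | mm (u + 1)] =ᵐ[P] w * P[zt | mm (u + 1)] :=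
          condExp_mul_of_aestronglyMeasurable_left hw_sm.aestronglyMeasurable hwzt_int (hzint (u + 1))
        rw [e1, ← integral_condExp hm, integral_congr_ae hpull]
        rfl
      have hwI : ∫ ω, w ω ∂P = c u (k + 1) - c u k := by
        rw [hc_def]; dsimp only
        rw [hw_def]
        exact integral_sub (hcint u (k + 1)) (hcint u k)
      have h5 : c (u + 1) k - Y k = ∫ ω, w ω * (ph ω - l) ∂P := by
        have hwph_int : Integrable (fun ω => w ω * ph ω) P :=
          Integrable.bdd_mul hphat_int hwmeas.aestronglyMeasurable
            (ae_of_all _ fun ω => by rw [Real.norm_eq_abs]; exact hw1 ω)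
        have e2 : ∫ ω, w ω * (ph ω - l) ∂P = ∫ ω, w ω * ph ω ∂P - l * ∫ ω, w ω ∂P := by
          have : (fun ω => w ω * (ph ω - l)) = fun ω => w ω * ph ω - l * w ω := by
            funext ω; ring
          rw [this, integral_sub hwph_int (hwint.const_mul l), integral_const_mul]
        rw [e2, ← h3, h2, hY_def]; dsimp only
        rw [hwI]
        ring
      rw [h5]
      have h6 : |∫ ω, w ω * (ph ω - l) ∂P| ≤ ∫ ω, |w ω| * |ph ω - l| ∂P := by
        have := norm_integral_le_integral_norm (μ := P) (fun ω => w ω * (ph ω - l))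
        simpa [Real.norm_eq_abs, abs_mul] using this
      refine h6.trans ?_
      rw [hK_def]
      refine integral_mono ?_ hphl_int.abs ?_
      · have hint : Integrable (fun ω => w ω * (ph ω - l)) P :=
          Integrable.bdd_mul hphl_int hwmeas.aestronglyMeasurable
            (ae_of_all _ fun ω => by rw [Real.norm_eq_abs]; exact hw1 ω)
        exact hint.abs.congr (ae_of_all _ fun ω =>
          show |w ω * (ph ω - l)| = |w ω| * |ph ω - l| from abs_mul _ _)
      · intro ω
        dsimp only
        calc |w ω| * |ph ω - l| ≤ 1 * |ph ω - l| :=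
              mul_le_mul_of_nonneg_right (hw1 ω) (abs_nonneg _)
          _ = |ph ω - l| := one_mul _
    -- assemble
    have hK0 : 0 ≤ K := integral_nonneg (fun ω => abs_nonneg _)
    have hq := summable_poisPMF μ
    have hqn : ∀ k, 0 ≤ poisPMF μ k := poisPMF_nonneg hμ0
    have hsummul : ∀ (v : ℕ → ℝ), (∀ k, |v k| ≤ 1) → Summable (fun k => poisPMF μ k * v k) := by
      intro v hv
      apply hq.of_norm_bounded
      intro k
      rw [Real.norm_eq_abs, abs_mul, abs_of_nonneg (hqn k)]
      calc poisPMF μ k * |v k| ≤ poisPMF μ k * 1 :=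
            mul_le_mul_of_nonneg_left (hv k) (hqn k)
        _ = poisPMF μ k := mul_one _
    have hXbd : ∀ k, |c (u + 1) k| ≤ 1 := fun k => by
      rw [abs_of_nonneg (hc0 _ _)]; exact hc1 _ _
    have hYbd : ∀ k, |Y k| ≤ 1 := by
      intro k
      rw [hY_def]; dsimp only
      rw [abs_le]
      have e1 := hc0 u k
      have e2 := hc1 u k
      have e3 := hc0 u (k + 1)
      have e4 := hc1 u (k + 1)
      constructor <;> nlinarith
    have s1 : Summable (fun k => poisPMF μ k * c (u + 1) k) := hsummul _ hXbd
    have s2 : Summable (fun k => poisPMF μ k * Y k) := hsummul _ hYbd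
    have hA23 : |(∑' k, poisPMF μ k * Y k) - DD u| ≤ l ^ 2 := by
      rw [hDD_def]; dsimp only
      rw [hρsplit, hY_def]
      exact key_B hμ0 hl0 hl1 (hc0 u) (hc1 u)
    have hA12 : |(∑' k, poisPMF μ k * c (u + 1) k) - ∑' k, poisPMF μ k * Y k| ≤ K := by
      rw [← Summable.tsum_sub s1 s2]
      have e1 : (fun k => poisPMF μ k * c (u + 1) k - poisPMF μ k * Y k)
          = fun k => poisPMF μ k * (c (u + 1) k - Y k) := by
        funext k; ring
      rw [e1]
      have sd : Summable (fun k => poisPMF μ k * (c (u + 1) k - Y k)) := by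
        refine (s1.sub s2).congr (fun k => ?_)
        try dsimp only
        ring
      have snorm : Summable (fun k => ‖poisPMF μ k * (c (u + 1) k - Y k)‖) := by
        simp only [Real.norm_eq_abs]
        exact sd.abs
      refine (norm_tsum_le_tsum_norm snorm).trans ?_
      calc ∑' k, ‖poisPMF μ k * (c (u + 1) k - Y k)‖ ≤ ∑' k, poisPMF μ k * K := by
            refine Summable.tsum_le_tsum ?_ snorm (hq.mul_right K)
            intro k
            rw [Real.norm_eq_abs, abs_mul, abs_of_nonneg (hqn k)]
            exact mul_le_mul_of_nonneg_left (hXYb k) (hqn k)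
        _ = (∑' k, poisPMF μ k) * K := tsum_mul_right
        _ = K := by rw [tsum_poisPMF, one_mul]
    have hDDu1 : DD (u + 1) = ∑' k, poisPMF μ k * c (u + 1) k := by
      rw [hDD_def]
    calc |DD (u + 1) - DD u|
        ≤ |DD (u + 1) - ∑' k, poisPMF μ k * Y k| + |(∑' k, poisPMF μ k * Y k) - DD u| :=
          abs_sub_le _ _ _
      _ ≤ K + l ^ 2 := by
          rw [hDDu1]
          exact add_le_add hA12 hA23
      _ ≤ l ^ 2 + K := by linarith
  -- telescoping
  have htel : DD n - DD 0 = ∑ t ∈ Finset.Icc 1 n, (DD t - DD (t - 1)) := by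
    have h1 : ∑ t ∈ Finset.Icc 1 n, (DD t - DD (t - 1))
        = ∑ i ∈ Finset.range n, (DD (i + 1) - DD i) := by
      rw [← Finset.Ico_add_one_right_eq_Icc, Finset.sum_Ico_eq_sum_range]
      have h2 : n + 1 - 1 = n := by omega
      rw [h2]
      refine Finset.sum_congr rfl (fun i _ => ?_)
      congr 2 <;> omega
    rw [h1, Finset.sum_range_sub]
  have hfinal : |DD n - DD 0| ≤
      (∑ t ∈ Finset.Icc 1 n, lam t ^ 2) + ∑ t ∈ Finset.Icc 1 n, ∫ ω, |phat t ω - lam t| ∂P := by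
    rw [htel, ← Finset.sum_add_distrib]
    refine (Finset.abs_sum_le_sum_abs _ _).trans (Finset.sum_le_sum ?_)
    intro t ht
    rw [Finset.mem_Icc] at ht
    exact step t ht.1 ht.2
  rw [← hDDn, ← hDD0] at *
  exact hfinal
end

section
/- Let $X$ be an INAR(1) process with $X_0 = 0$, parameter $1 - h/n^2$ ($h \ge 0$ fixed), and finite innovation variance. Then $\lim_{n \to \infty} \mathbb{P}_{1-h/n^2}\{\exists t \in \{1, \dots, n\}: X_{t-1} - \theta \circ X_{t-1} \ge 2\} = 0$; that is, with probability tending to one, at most one 'death' occurs in every time interval during $[0, n]$. -/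
open MeasureTheory ProbabilityTheory Filter Finset
open scoped ENNReal

/-- An INAR(1) process with autoregression parameter `θ` and innovation
distribution `G` on `ℕ`, defined on the probability space `(Ω, P)`:
`X 0 = 0` and `X (t+1) = θ ∘ X t + ε (t+1)`, where the binomial thinning
`θ ∘ X t` is the sum of `X t` i.i.d. Bernoulli(θ) variables `Z (t+1) j`,
all thinning variables and innovations being jointly independent. -/
structure INAR {Ω : Type} [MeasurableSpace Ω] (P : Measure Ω)
    (θ : ℝ) (G : PMF ℕ) where
  Z : ℕ → ℕ → Ω → ℕ
  ε : ℕ → Ω → ℕ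
  X : ℕ → Ω → ℕ
  hZmeas : ∀ t j, Measurable (Z t j)
  hεmeas : ∀ t, Measurable (ε t)
  hZle : ∀ t j ω, Z t j ω ≤ 1
  hZdist : ∀ t j, P {ω | Z t j ω = 1} = ENNReal.ofReal θ
  hεdist : ∀ t k, P {ω | ε t ω = k} = G k
  hIndep : iIndepFun
      (Sum.elim (fun p : ℕ × ℕ => Z p.1 p.2) ε) P
  hX0 : ∀ ω, X 0 ω = 0
  hXrec : ∀ t ω, X (t + 1) ω =
      (∑ j ∈ Finset.range (X t ω), Z (t + 1) j ω) + ε (t + 1) ω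

namespace INARAux

lemma measurable_rand_sum {Ω : Type} [mΩ : MeasurableSpace Ω] {f : Ω → ℕ} {Z : ℕ → Ω → ℕ}
    (hf : Measurable f) (hZ : ∀ j, Measurable (Z j)) :
    Measurable fun ω => ∑ j ∈ Finset.range (f ω), Z j ω := by
  have h1 : Measurable fun p : Ω × ℕ => ∑ j ∈ Finset.range p.2, Z j p.1 :=
    measurable_from_prod_countable_left fun k => by
      simpa using Finset.measurable_sum (Finset.range k) fun j _ => hZ j
  exact h1.comp (measurable_id.prodMk hf)

variable {Ω : Type} [mΩ : MeasurableSpace Ω] {P : Measure Ω} [IsProbabilityMeasure P]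
  {θ : ℝ} {G : PMF ℕ}

/-- the "time" of an index of the driving family -/
def tIdx : (ℕ × ℕ) ⊕ ℕ → ℕ := Sum.elim Prod.fst id

/-- the driving family of random variables -/
def Fam (I : INAR P θ G) : (ℕ × ℕ) ⊕ ℕ → Ω → ℕ :=
  Sum.elim (fun p : ℕ × ℕ => I.Z p.1 p.2) I.ε

lemma Fam_meas (I : INAR P θ G) : ∀ i, Measurable (Fam I i) := by
  rintro (⟨t, j⟩ | t)
  · exact I.hZmeas t j
  · exact I.hεmeas t

/-- σ-algebra generated by the driving variables up to time r -/
def sig (I : INAR P θ G) (r : ℕ) : MeasurableSpace Ω :=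
  ⨆ i ∈ {i : (ℕ × ℕ) ⊕ ℕ | tIdx i ≤ r}, MeasurableSpace.comap (Fam I i) inferInstance

lemma sig_le (I : INAR P θ G) (r : ℕ) : sig I r ≤ mΩ :=
  iSup₂_le fun i _ => (Fam_meas I i).comap_le

lemma meas_sig (I : INAR P θ G) {r : ℕ} {i : (ℕ × ℕ) ⊕ ℕ} (hi : tIdx i ≤ r) :
    Measurable[sig I r] (Fam I i) :=
  Measurable.of_comap_le (le_biSup (f := fun i => MeasurableSpace.comap (Fam I i) inferInstance) hi)

lemma sig_mono (I : INAR P θ G) {a b : ℕ} (hab : a ≤ b) : sig I a ≤ sig I b :=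
  biSup_mono fun i hi => le_trans hi hab

lemma X_meas_sig (I : INAR P θ G) (r : ℕ) : Measurable[sig I r] (I.X r) := by
  induction r with
  | zero =>
    have hX : I.X 0 = fun _ => 0 := funext I.hX0
    rw [hX]; exact measurable_const
  | succ r ih =>
    have hX : I.X (r + 1) = fun ω =>
        (∑ j ∈ Finset.range (I.X r ω), I.Z (r + 1) j ω) + I.ε (r + 1) ω :=
      funext (I.hXrec r)
    rw [hX]
    have hZm : ∀ j, Measurable[sig I (r + 1)] (I.Z (r + 1) j) := fun j =>
      meas_sig I (i := Sum.inl (r + 1, j)) le_rfl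
    have hXm : Measurable[sig I (r + 1)] (I.X r) :=
      ih.mono (sig_mono I (Nat.le_succ r)) le_rfl
    have hεm : Measurable[sig I (r + 1)] (I.ε (r + 1)) :=
      meas_sig I (i := Sum.inr (r + 1)) le_rfl
    exact Measurable.add (measurable_rand_sum (mΩ := sig I (r + 1)) hXm hZm) hεm

lemma X_meas (I : INAR P θ G) (r : ℕ) : Measurable (I.X r) :=
  (X_meas_sig I r).mono (sig_le I r) le_rfl

lemma lintegral_nat {f : Ω → ℕ} (hf : Measurable f) (g : ℕ → ℝ≥0∞) :
    ∫⁻ ω, g (f ω) ∂P = ∑' k, g k * P {ω | f ω = k} := by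
  rw [← lintegral_map (measurable_of_countable g) hf, lintegral_countable']
  exact tsum_congr fun k => by rw [Measure.map_apply hf (measurableSet_singleton k)]; rfl

lemma eps_sq (I : INAR P θ G) (t : ℕ) :
    ∫⁻ ω, ((I.ε t ω : ℝ≥0∞)) ^ 2 ∂P = ∑' k : ℕ, (k : ℝ≥0∞) ^ 2 * G k := by
  rw [lintegral_nat (I.hεmeas t) (fun k => (k : ℝ≥0∞) ^ 2)]
  exact tsum_congr fun k => by rw [I.hεdist]

lemma X_le_sum_eps (I : INAR P θ G) (t : ℕ) (ω : Ω) :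
    I.X t ω ≤ ∑ s ∈ Finset.Icc 1 t, I.ε s ω := by
  induction t with
  | zero => simp [I.hX0]
  | succ t ih =>
    have h1 : ∑ j ∈ Finset.range (I.X t ω), I.Z (t + 1) j ω ≤ I.X t ω := by
      calc ∑ j ∈ Finset.range (I.X t ω), I.Z (t + 1) j ω
          ≤ ∑ _j ∈ Finset.range (I.X t ω), 1 :=
            Finset.sum_le_sum fun j _ => I.hZle (t + 1) j ω
        _ = I.X t ω := by simp
    have h2 := I.hXrec t ω
    rw [Finset.sum_Icc_succ_top (Nat.one_le_iff_ne_zero.mpr (Nat.succ_ne_zero t))]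
    omega

lemma X_sq_le (I : INAR P θ G) (t : ℕ) :
    ∫⁻ ω, ((I.X t ω : ℝ≥0∞)) ^ 2 ∂P
      ≤ (t : ℝ≥0∞) ^ 2 * (2 * ∑' k : ℕ, (k : ℝ≥0∞) ^ 2 * G k) := by
  set F := Finset.Icc 1 t with hF
  have hcard : F.card = t := by simp [hF]
  have hmeas : ∀ s : ℕ, Measurable fun ω => ((I.ε s ω : ℝ≥0∞)) ^ 2 := fun s =>
    (measurable_of_countable (fun k : ℕ => (k : ℝ≥0∞) ^ 2)).comp (I.hεmeas s)
  calc ∫⁻ ω, ((I.X t ω : ℝ≥0∞)) ^ 2 ∂P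
      ≤ ∫⁻ ω, ∑ s ∈ F, ∑ s' ∈ F,
          (((I.ε s ω : ℝ≥0∞)) ^ 2 + ((I.ε s' ω : ℝ≥0∞)) ^ 2) ∂P := by
        apply lintegral_mono
        intro ω
        have hnat : (I.X t ω) ^ 2 ≤ ∑ s ∈ F, ∑ s' ∈ F,
            ((I.ε s ω) ^ 2 + (I.ε s' ω) ^ 2) := by
          calc (I.X t ω) ^ 2 ≤ (∑ s ∈ F, I.ε s ω) ^ 2 :=
              Nat.pow_le_pow_left (X_le_sum_eps I t ω) 2
            _ = ∑ s ∈ F, ∑ s' ∈ F, (I.ε s ω) * (I.ε s' ω) := by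
              rw [sq, Finset.sum_mul_sum]
            _ ≤ ∑ s ∈ F, ∑ s' ∈ F, ((I.ε s ω) ^ 2 + (I.ε s' ω) ^ 2) := by
              refine Finset.sum_le_sum fun s _ => Finset.sum_le_sum fun s' _ => ?_
              rcases le_total (I.ε s ω) (I.ε s' ω) with hss | hss
              · calc I.ε s ω * I.ε s' ω ≤ I.ε s' ω * I.ε s' ω :=
                    Nat.mul_le_mul_right _ hss
                  _ ≤ _ := by rw [← sq]; omega
              · calc I.ε s ω * I.ε s' ω ≤ I.ε s ω * I.ε s ω :=
                    Nat.mul_le_mul_left _ hss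
                  _ ≤ _ := by rw [← sq]; omega
        calc ((I.X t ω : ℝ≥0∞)) ^ 2 = (((I.X t ω) ^ 2 : ℕ) : ℝ≥0∞) := by push_cast; ring
          _ ≤ ((∑ s ∈ F, ∑ s' ∈ F, ((I.ε s ω) ^ 2 + (I.ε s' ω) ^ 2) : ℕ) : ℝ≥0∞) :=
            Nat.cast_le.mpr hnat
          _ = _ := by push_cast; ring
    _ = ∑ s ∈ F, ∑ s' ∈ F, ((∑' k : ℕ, (k : ℝ≥0∞) ^ 2 * G k) + ∑' k : ℕ, (k : ℝ≥0∞) ^ 2 * G k) := by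
        rw [lintegral_finset_sum]
        · refine Finset.sum_congr rfl fun s _ => ?_
          rw [lintegral_finset_sum]
          · exact Finset.sum_congr rfl fun s' _ => by
              rw [lintegral_add_left (hmeas s), eps_sq, eps_sq]
          · exact fun s' _ => (hmeas s).add (hmeas s')
        · exact fun s _ => Finset.measurable_sum _ fun s' _ => (hmeas s).add (hmeas s')
    _ = (t : ℝ≥0∞) ^ 2 * (2 * ∑' k : ℕ, (k : ℝ≥0∞) ^ 2 * G k) := by
        rw [Finset.sum_const, Finset.sum_const, hcard, nsmul_eq_mul, nsmul_eq_mul]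
        ring

lemma Z_zero_prob (I : INAR P θ G) (t j : ℕ) :
    P {ω | I.Z t j ω = 0} = 1 - ENNReal.ofReal θ := by
  have hset : {ω | I.Z t j ω = 0} = {ω | I.Z t j ω = 1}ᶜ := by
    ext ω
    have := I.hZle t j ω
    simp only [Set.mem_setOf_eq, Set.mem_compl_iff]
    omega
  have hms : MeasurableSet {ω | I.Z t j ω = 1} :=
    I.hZmeas t j (measurableSet_singleton 1)
  rw [hset, prob_compl_eq_one_sub hms, I.hZdist]

lemma prod3 (I : INAR P θ G) {t j k m : ℕ} (ht : 1 ≤ t) (hjk : j ≠ k) :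
    P ({ω | I.X (t - 1) ω = m} ∩ ({ω | I.Z t j ω = 0} ∩ {ω | I.Z t k ω = 0}))
      = P {ω | I.X (t - 1) ω = m}
        * (P {ω | I.Z t j ω = 0} * P {ω | I.Z t k ω = 0}) := by
  set T : Set ((ℕ × ℕ) ⊕ ℕ) := {Sum.inl (t, j), Sum.inl (t, k)} with hT
  have hInd : Indep (sig I (t - 1))
      (⨆ i ∈ T, MeasurableSpace.comap (Fam I i) inferInstance) P := by
    apply indep_iSup_of_disjoint (fun i => (Fam_meas I i).comap_le) I.hIndep
    rw [Set.disjoint_left]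
    intro i hi hiT
    rcases hiT with h | h <;> subst h <;>
      · simp only [Set.mem_setOf_eq, tIdx, Sum.elim_inl] at hi
        omega
  have hA : MeasurableSet[sig I (t - 1)] {ω | I.X (t - 1) ω = m} :=
    X_meas_sig I (t - 1) (measurableSet_singleton m)
  have hB1 : MeasurableSet[⨆ i ∈ T, MeasurableSpace.comap (Fam I i) inferInstance]
      {ω | I.Z t j ω = 0} := by
    have h1 : MeasurableSpace.comap (Fam I (Sum.inl (t, j))) inferInstance
        ≤ ⨆ i ∈ T, MeasurableSpace.comap (Fam I i) inferInstance :=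
      le_biSup (f := fun i => MeasurableSpace.comap (Fam I i) inferInstance) (by simp [hT])
    exact h1 _ ⟨{0}, measurableSet_singleton 0, rfl⟩
  have hB2 : MeasurableSet[⨆ i ∈ T, MeasurableSpace.comap (Fam I i) inferInstance]
      {ω | I.Z t k ω = 0} := by
    have h1 : MeasurableSpace.comap (Fam I (Sum.inl (t, k))) inferInstance
        ≤ ⨆ i ∈ T, MeasurableSpace.comap (Fam I i) inferInstance :=
      le_biSup (f := fun i => MeasurableSpace.comap (Fam I i) inferInstance) (by simp [hT])
    exact h1 _ ⟨{0}, measurableSet_singleton 0, rfl⟩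
  rw [(hInd.indepSet_of_measurableSet hA (hB1.inter hB2)).measure_inter_eq_mul]
  congr 1
  have hIF : IndepFun (I.Z t j) (I.Z t k) P := by
    have : (Sum.inl (t, j) : (ℕ × ℕ) ⊕ ℕ) ≠ Sum.inl (t, k) := by simp [hjk]
    exact I.hIndep.indepFun this
  exact hIF.measure_inter_preimage_eq_mul _ _ (measurableSet_singleton 0)
    (measurableSet_singleton 0)

lemma per_t (I : INAR P θ G) {t : ℕ} (ht : 1 ≤ t) :
    P {ω | 2 ≤ I.X (t - 1) ω - ∑ j ∈ Finset.range (I.X (t - 1) ω), I.Z t j ω}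
      ≤ (1 - ENNReal.ofReal θ) ^ 2 * ∫⁻ ω, ((I.X (t - 1) ω : ℝ≥0∞)) ^ 2 ∂P := by
  classical
  set q : ℝ≥0∞ := 1 - ENNReal.ofReal θ with hq
  set pairs : ℕ → Finset (ℕ × ℕ) := fun m =>
    (Finset.range m ×ˢ Finset.range m).filter (fun p : ℕ × ℕ => p.1 < p.2) with hpairs
  have hsub : {ω | 2 ≤ I.X (t - 1) ω - ∑ j ∈ Finset.range (I.X (t - 1) ω), I.Z t j ω}
      ⊆ ⋃ m : ℕ, ⋃ p ∈ pairs m,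
        ({ω | I.X (t - 1) ω = m} ∩ ({ω | I.Z t p.1 ω = 0} ∩ {ω | I.Z t p.2 ω = 0})) := by
    intro ω hω
    simp only [Set.mem_setOf_eq] at hω
    set m := I.X (t - 1) ω with hm
    set S := (Finset.range m).filter (fun j => I.Z t j ω = 0) with hS
    have hsum : (Finset.range m \ S).card ≤ ∑ j ∈ Finset.range m, I.Z t j ω := by
      calc (Finset.range m \ S).card = ∑ _j ∈ Finset.range m \ S, 1 := by simp
        _ ≤ ∑ j ∈ Finset.range m \ S, I.Z t j ω := by
            refine Finset.sum_le_sum fun j hj => ?_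
            have hj' : ¬ (I.Z t j ω = 0) := by
              rw [Finset.mem_sdiff] at hj
              intro h0
              exact hj.2 (Finset.mem_filter.mpr ⟨hj.1, h0⟩)
            omega
        _ ≤ ∑ j ∈ Finset.range m, I.Z t j ω :=
            Finset.sum_le_sum_of_subset (Finset.sdiff_subset)
    have hcards : (Finset.range m \ S).card = m - S.card := by
      rw [Finset.card_sdiff_of_subset (Finset.filter_subset _ _)]
      simp [hS]
    have hSle : S.card ≤ m := by
      have := Finset.card_filter_le (Finset.range m) (fun j => I.Z t j ω = 0)
      simpa using this
    have h2S : 1 < S.card := by omega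
    obtain ⟨a, ha, b, hb, hab⟩ := Finset.one_lt_card.mp h2S
    have haS := Finset.mem_filter.mp ha
    have hbS := Finset.mem_filter.mp hb
    have haR := Finset.mem_range.mp haS.1
    have hbR := Finset.mem_range.mp hbS.1
    simp only [Set.mem_iUnion, Set.mem_inter_iff, Set.mem_setOf_eq]
    rcases lt_or_gt_of_ne hab with hlt | hgt
    · exact ⟨m, (a, b), Finset.mem_filter.mpr
        ⟨Finset.mem_product.mpr ⟨haS.1, hbS.1⟩, hlt⟩, hm.symm, haS.2, hbS.2⟩
    · exact ⟨m, (b, a), Finset.mem_filter.mpr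
        ⟨Finset.mem_product.mpr ⟨hbS.1, haS.1⟩, hgt⟩, hm.symm, hbS.2, haS.2⟩
  calc P {ω | 2 ≤ I.X (t - 1) ω - ∑ j ∈ Finset.range (I.X (t - 1) ω), I.Z t j ω}
      ≤ P (⋃ m : ℕ, ⋃ p ∈ pairs m,
        ({ω | I.X (t - 1) ω = m} ∩ ({ω | I.Z t p.1 ω = 0} ∩ {ω | I.Z t p.2 ω = 0}))) :=
        measure_mono hsub
    _ ≤ ∑' m : ℕ, P (⋃ p ∈ pairs m,
        ({ω | I.X (t - 1) ω = m} ∩ ({ω | I.Z t p.1 ω = 0} ∩ {ω | I.Z t p.2 ω = 0}))) :=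
        measure_iUnion_le _
    _ ≤ ∑' m : ℕ, ∑ p ∈ pairs m,
        P ({ω | I.X (t - 1) ω = m} ∩ ({ω | I.Z t p.1 ω = 0} ∩ {ω | I.Z t p.2 ω = 0})) :=
        ENNReal.tsum_le_tsum fun m => measure_biUnion_finset_le _ _
    _ = ∑' m : ℕ, ∑ p ∈ pairs m, P {ω | I.X (t - 1) ω = m} * (q * q) := by
        refine tsum_congr fun m => Finset.sum_congr rfl fun p hp => ?_
        have hplt : p.1 < p.2 := (Finset.mem_filter.mp hp).2
        rw [prod3 I ht (Nat.ne_of_lt hplt), Z_zero_prob, Z_zero_prob]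
    _ ≤ ∑' m : ℕ, (m : ℝ≥0∞) ^ 2 * P {ω | I.X (t - 1) ω = m} * (q * q) := by
        refine ENNReal.tsum_le_tsum fun m => ?_
        rw [Finset.sum_const, nsmul_eq_mul]
        have hcard : ((pairs m).card : ℝ≥0∞) ≤ (m : ℝ≥0∞) ^ 2 := by
          have h1 : (pairs m).card ≤ m ^ 2 := by
            calc (pairs m).card ≤ (Finset.range m ×ˢ Finset.range m).card :=
                Finset.card_filter_le _ _
              _ = m ^ 2 := by rw [Finset.card_product]; simp [sq]
          calc ((pairs m).card : ℝ≥0∞) ≤ ((m ^ 2 : ℕ) : ℝ≥0∞) := Nat.cast_le.mpr h1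
            _ = (m : ℝ≥0∞) ^ 2 := by push_cast; ring
        calc ((pairs m).card : ℝ≥0∞) * (P {ω | I.X (t - 1) ω = m} * (q * q))
            ≤ (m : ℝ≥0∞) ^ 2 * (P {ω | I.X (t - 1) ω = m} * (q * q)) :=
              mul_le_mul_left hcard _
          _ = (m : ℝ≥0∞) ^ 2 * P {ω | I.X (t - 1) ω = m} * (q * q) := by ring
    _ = (∑' m : ℕ, (m : ℝ≥0∞) ^ 2 * P {ω | I.X (t - 1) ω = m}) * (q * q) := by
        rw [ENNReal.tsum_mul_right]
    _ = q ^ 2 * ∫⁻ ω, ((I.X (t - 1) ω : ℝ≥0∞)) ^ 2 ∂P := by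
        rw [lintegral_nat (X_meas I (t - 1)) (fun k => (k : ℝ≥0∞) ^ 2)]
        ring

end INARAux

open INARAux in
/-- For a nearly unstable INAR(1) process with parameter `1 - h/n²`, the
probability that some time interval in `[0, n]` sees at least two 'deaths'
(`X_{t-1} - θ ∘ X_{t-1} ≥ 2`) tends to `0`. -/
theorem inar_at_most_one_death
    {Ω : ℕ → Type} [∀ n, MeasurableSpace (Ω n)] (P : ∀ n, Measure (Ω n))
    [∀ n, IsProbabilityMeasure (P n)] (h : ℝ) (hh : 0 ≤ h) (G : PMF ℕ)
    (M : ∀ n, INAR (P n) (1 - h / (n : ℝ) ^ 2) G)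
    (h2 : Summable (fun k : ℕ => (k : ℝ) ^ 2 * (G k).toReal)) :
    Filter.Tendsto
      (fun n : ℕ =>
        ((P n) {ω | ∃ t ∈ Finset.Icc 1 n,
            2 ≤ (M n).X (t - 1) ω -
              ∑ j ∈ Finset.range ((M n).X (t - 1) ω), (M n).Z t j ω}).toReal)
      Filter.atTop (nhds 0) := by
  classical
  set m2 : ℝ≥0∞ := ∑' k : ℕ, (k : ℝ≥0∞) ^ 2 * G k with hm2def
  have hm2eq : m2 = ENNReal.ofReal (∑' k : ℕ, (k : ℝ) ^ 2 * (G k).toReal) := by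
    rw [ENNReal.ofReal_tsum_of_nonneg (fun k => by positivity) h2]
    refine tsum_congr fun k => ?_
    rw [ENNReal.ofReal_mul (by positivity), ENNReal.ofReal_toReal (G.apply_ne_top k)]
    congr 1
    rw [ENNReal.ofReal_pow (by positivity)]
    simp
  have hm2top : m2 ≠ ⊤ := by rw [hm2eq]; exact ENNReal.ofReal_ne_top
  set C : ℝ := 2 * h ^ 2 * m2.toReal with hC
  have hm2nn : 0 ≤ m2.toReal := ENNReal.toReal_nonneg
  refine squeeze_zero' (Eventually.of_forall fun n => ENNReal.toReal_nonneg) ?_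
    (tendsto_const_div_atTop_nhds_zero_nat C)
  have hev : ∀ᶠ n : ℕ in atTop, h ≤ (n : ℝ) ∧ 1 ≤ n := by
    filter_upwards [tendsto_natCast_atTop_atTop.eventually_ge_atTop h,
      eventually_ge_atTop 1] with n h1 h2'
    exact ⟨h1, h2'⟩
  filter_upwards [hev] with n hn
  obtain ⟨hhn, hn1⟩ := hn
  have hnR : (1 : ℝ) ≤ (n : ℝ) := by exact_mod_cast hn1
  have hn0 : (0 : ℝ) < (n : ℝ) := by linarith
  have hnsq : h ≤ (n : ℝ) ^ 2 := by nlinarith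
  have hnsq0 : (0 : ℝ) < (n : ℝ) ^ 2 := by positivity
  have hdiv_nonneg : 0 ≤ h / (n : ℝ) ^ 2 := by positivity
  have hdiv_le_one : h / (n : ℝ) ^ 2 ≤ 1 := by
    rw [div_le_one hnsq0]; linarith
  set I := M n with hI
  have hqval : (1 : ℝ≥0∞) - ENNReal.ofReal (1 - h / (n : ℝ) ^ 2)
      = ENNReal.ofReal (h / (n : ℝ) ^ 2) := by
    rw [ENNReal.ofReal_sub 1 hdiv_nonneg, ENNReal.ofReal_one]
    exact ENNReal.sub_sub_cancel ENNReal.one_ne_top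
      (by rw [← ENNReal.ofReal_one]; exact ENNReal.ofReal_le_ofReal hdiv_le_one)
  -- union bound over t
  have hsub : {ω | ∃ t ∈ Finset.Icc 1 n,
      2 ≤ I.X (t - 1) ω - ∑ j ∈ Finset.range (I.X (t - 1) ω), I.Z t j ω}
      ⊆ ⋃ t ∈ Finset.Icc 1 n,
        {ω | 2 ≤ I.X (t - 1) ω - ∑ j ∈ Finset.range (I.X (t - 1) ω), I.Z t j ω} := by
    intro ω hω
    obtain ⟨t, ht, hω'⟩ := hω
    exact Set.mem_biUnion ht hω'
  have key : (P n) {ω | ∃ t ∈ Finset.Icc 1 n,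
      2 ≤ I.X (t - 1) ω - ∑ j ∈ Finset.range (I.X (t - 1) ω), I.Z t j ω}
      ≤ (n : ℝ≥0∞) * ((1 - ENNReal.ofReal (1 - h / (n : ℝ) ^ 2)) ^ 2 * ((n : ℝ≥0∞) ^ 2 * (2 * m2))) := by
    calc (P n) {ω | ∃ t ∈ Finset.Icc 1 n,
        2 ≤ I.X (t - 1) ω - ∑ j ∈ Finset.range (I.X (t - 1) ω), I.Z t j ω}
        ≤ (P n) (⋃ t ∈ Finset.Icc 1 n,
          {ω | 2 ≤ I.X (t - 1) ω - ∑ j ∈ Finset.range (I.X (t - 1) ω), I.Z t j ω}) :=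
          measure_mono hsub
      _ ≤ ∑ t ∈ Finset.Icc 1 n, (P n)
          {ω | 2 ≤ I.X (t - 1) ω - ∑ j ∈ Finset.range (I.X (t - 1) ω), I.Z t j ω} :=
          measure_biUnion_finset_le _ _
      _ ≤ ∑ t ∈ Finset.Icc 1 n,
          (1 - ENNReal.ofReal (1 - h / (n : ℝ) ^ 2)) ^ 2 * ((n : ℝ≥0∞) ^ 2 * (2 * m2)) := by
          refine Finset.sum_le_sum fun t ht => ?_
          have ht1 : 1 ≤ t := (Finset.mem_Icc.mp ht).1
          have htn : t - 1 ≤ n := by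
            have := (Finset.mem_Icc.mp ht).2; omega
          refine (per_t I ht1).trans ?_
          refine mul_le_mul_right ?_ _
          refine (X_sq_le I (t - 1)).trans ?_
          exact mul_le_mul_left (pow_le_pow_left' (Nat.cast_le.mpr htn) 2) _
      _ = (n : ℝ≥0∞) * ((1 - ENNReal.ofReal (1 - h / (n : ℝ) ^ 2)) ^ 2 * ((n : ℝ≥0∞) ^ 2 * (2 * m2))) := by
          rw [Finset.sum_const, Nat.card_Icc, nsmul_eq_mul]
          norm_num
  have hBle : (n : ℝ≥0∞) * ((1 - ENNReal.ofReal (1 - h / (n : ℝ) ^ 2)) ^ 2 * ((n : ℝ≥0∞) ^ 2 * (2 * m2)))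
      ≤ ENNReal.ofReal (C / n) := by
    rw [hqval, hm2eq]
    have : (n : ℝ≥0∞) * ((ENNReal.ofReal (h / (n : ℝ) ^ 2)) ^ 2 * ((n : ℝ≥0∞) ^ 2 *
        (2 * ENNReal.ofReal (∑' k : ℕ, (k : ℝ) ^ 2 * (G k).toReal))))
        = ENNReal.ofReal ((n : ℝ) * ((h / (n : ℝ) ^ 2) ^ 2 * ((n : ℝ) ^ 2 *
          (2 * (∑' k : ℕ, (k : ℝ) ^ 2 * (G k).toReal))))) := by
      have htsnn : 0 ≤ ∑' k : ℕ, (k : ℝ) ^ 2 * (G k).toReal :=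
        tsum_nonneg fun k => by positivity
      rw [ENNReal.ofReal_mul (by positivity), ENNReal.ofReal_mul (by positivity),
        ENNReal.ofReal_mul (by positivity), ENNReal.ofReal_mul (by norm_num),
        ENNReal.ofReal_pow hdiv_nonneg, ENNReal.ofReal_pow (le_of_lt hn0)]
      simp [ENNReal.ofReal_natCast]
    rw [this]
    apply ENNReal.ofReal_le_ofReal
    have hts : m2.toReal = ∑' k : ℕ, (k : ℝ) ^ 2 * (G k).toReal := by
      rw [hm2eq, ENNReal.toReal_ofReal (tsum_nonneg fun k => by positivity)]
    rw [hC, hts]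
    have hne : (n : ℝ) ≠ 0 := ne_of_gt hn0
    refine le_of_eq ?_
    field_simp
  calc ((P n) {ω | ∃ t ∈ Finset.Icc 1 n,
      2 ≤ I.X (t - 1) ω - ∑ j ∈ Finset.range (I.X (t - 1) ω), I.Z t j ω}).toReal
      ≤ (ENNReal.ofReal (C / n)).toReal :=
        ENNReal.toReal_mono ENNReal.ofReal_ne_top (key.trans hBle)
    _ = C / n := ENNReal.toReal_ofReal (by positivity)
end

section
/- Let $X$ be an INAR(1) process with parameter $1 - h/n^2$, $h \ge 0$, $X_0 = 0$, innovations with mean $\mu_G$ and finite variance. Then $\hat{\mu}_{G,n} = X_n / n$ converges in probability to $\mu_G$ under $\mathbb{P}_{1-h/n^2}$ as $n \to \infty$. -/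
open MeasureTheory ProbabilityTheory Filter Finset

open scoped ENNReal

section Aux

lemma aux_comp_meas {Ω : Type} {m : MeasurableSpace Ω} {u : Ω → ℕ} (hu : Measurable[m] u)
    {g : ℕ → Ω → ℕ} (hg : ∀ k, Measurable[m] (g k)) :
    Measurable[m] fun ω => g (u ω) ω := by
  apply measurable_to_countable'
  intro k
  have h : (fun ω => g (u ω) ω) ⁻¹' {k} = ⋃ N, ({ω | u ω = N} ∩ {ω | g N ω = k}) := by
    ext ω
    simp only [Set.mem_preimage, Set.mem_singleton_iff, Set.mem_iUnion, Set.mem_inter_iff,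
      Set.mem_setOf_eq]
    exact ⟨fun hk => ⟨u ω, rfl, hk⟩, fun ⟨N, hN, hk⟩ => by rw [hN]; exact hk⟩
  rw [h]
  exact MeasurableSet.iUnion fun N =>
    (hu (measurableSet_singleton N)).inter (hg N (measurableSet_singleton k))

lemma pmf_integrable {p : PMF ℕ} {f : ℕ → ℝ}
    (hf : Summable fun k => |f k| * (p k).toReal) : Integrable f p.toMeasure := by
  refine ⟨measurable_from_top.aestronglyMeasurable, ?_⟩
  rw [hasFiniteIntegral_iff_norm]
  have h1 : ∫⁻ k, ENNReal.ofReal ‖f k‖ ∂p.toMeasure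
      = ∑' k, ENNReal.ofReal ‖f k‖ * p.toMeasure {k} := lintegral_countable' _
  rw [h1]
  have h2 : ∀ k, ENNReal.ofReal ‖f k‖ * p.toMeasure {k}
      = ENNReal.ofReal (|f k| * (p k).toReal) := by
    intro k
    rw [PMF.toMeasure_apply_singleton _ _ (measurableSet_singleton _),
      ENNReal.ofReal_mul (abs_nonneg _), Real.norm_eq_abs,
      ENNReal.ofReal_toReal (PMF.apply_ne_top p k)]
  simp_rw [h2]
  rw [← ENNReal.ofReal_tsum_of_nonneg (fun k => mul_nonneg (abs_nonneg _) ENNReal.toReal_nonneg) hf]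
  exact ENNReal.ofReal_lt_top

lemma pmf_integral {p : PMF ℕ} {f : ℕ → ℝ}
    (hf : Summable fun k => |f k| * (p k).toReal) :
    ∫ k, f k ∂p.toMeasure = ∑' k, f k * (p k).toReal := by
  rw [PMF.integral_eq_tsum _ _ (pmf_integrable hf)]
  exact tsum_congr fun k => by rw [smul_eq_mul, mul_comm]

variable {Ω : Type} [MeasurableSpace Ω] {P : Measure Ω} [IsProbabilityMeasure P]
  {θ : ℝ} {G : PMF ℕ} (M : INAR P θ G)

/-- the σ-algebra of the past up to time `t`. -/
def INAR.past (t : ℕ) : MeasurableSpace Ω :=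
  ⨆ i ∈ {i : (ℕ × ℕ) ⊕ ℕ | Sum.elim (fun p => p.1 ≤ t) (fun s => s ≤ t) i},
    MeasurableSpace.comap
      (Sum.elim (fun p : ℕ × ℕ => M.Z p.1 p.2) M.ε i) inferInstance

lemma INAR.le_past (t : ℕ) (i : (ℕ × ℕ) ⊕ ℕ)
    (hi : Sum.elim (fun p : ℕ × ℕ => p.1 ≤ t) (fun s => s ≤ t) i) :
    MeasurableSpace.comap
      (Sum.elim (fun p : ℕ × ℕ => M.Z p.1 p.2) M.ε i) inferInstance ≤ M.past t :=
  le_iSup₂ (f := fun i (_ : i ∈ {i : (ℕ × ℕ) ⊕ ℕ |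
      Sum.elim (fun p : ℕ × ℕ => p.1 ≤ t) (fun s => s ≤ t) i}) =>
    MeasurableSpace.comap
      (Sum.elim (fun p : ℕ × ℕ => M.Z p.1 p.2) M.ε i) inferInstance) i hi

lemma INAR.past_le (t : ℕ) : M.past t ≤ ‹MeasurableSpace Ω› := by
  refine iSup₂_le fun i _ => ?_
  cases i with
  | inl p => exact measurable_iff_comap_le.mp (M.hZmeas p.1 p.2)
  | inr s => exact measurable_iff_comap_le.mp (M.hεmeas s)

lemma INAR.measurable_past_X (t : ℕ) : Measurable[M.past t] (M.X t) := by
  induction t with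
  | zero =>
    have h0 : M.X 0 = fun _ => 0 := funext M.hX0
    rw [h0]; exact measurable_const
  | succ t ih =>
    have hmono : M.past t ≤ M.past (t + 1) := by
      refine iSup₂_le fun i hi => ?_
      refine M.le_past (t + 1) i ?_
      cases i with
      | inl p => exact Nat.le_succ_of_le hi
      | inr s => exact Nat.le_succ_of_le hi
    have hXt : Measurable[M.past (t + 1)] (M.X t) := ih.mono hmono le_rfl
    have hZ : ∀ j, Measurable[M.past (t + 1)] (M.Z (t + 1) j) := fun j =>
      measurable_iff_comap_le.mpr (M.le_past (t + 1) (Sum.inl (t + 1, j)) (le_refl (t + 1)))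
    have hε : Measurable[M.past (t + 1)] (M.ε (t + 1)) :=
      measurable_iff_comap_le.mpr (M.le_past (t + 1) (Sum.inr (t + 1)) (le_refl (t + 1)))
    have hX1 : M.X (t + 1)
        = fun ω => (∑ j ∈ Finset.range (M.X t ω), M.Z (t + 1) j ω) + M.ε (t + 1) ω :=
      funext (M.hXrec t)
    rw [hX1]
    have hsum : Measurable[M.past (t + 1)]
        fun ω => ∑ j ∈ Finset.range (M.X t ω), M.Z (t + 1) j ω :=
      aux_comp_meas hXt (g := fun N ω => ∑ j ∈ Finset.range N, M.Z (t + 1) j ω)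
        fun N => Finset.measurable_sum _ fun j _ => hZ j
    exact hsum.add hε

lemma INAR.measX (t : ℕ) : Measurable (M.X t) :=
  (M.measurable_past_X t).mono (M.past_le t) le_rfl

lemma INAR.indep_ZX (t j : ℕ) : IndepFun (M.Z (t + 1) j) (M.X t) P := by
  have hI : iIndep (fun i => MeasurableSpace.comap
      (Sum.elim (fun p : ℕ × ℕ => M.Z p.1 p.2) M.ε i) inferInstance) P :=
    M.hIndep.iIndep
  have h_le : ∀ i, MeasurableSpace.comap
      (Sum.elim (fun p : ℕ × ℕ => M.Z p.1 p.2) M.ε i) inferInstance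
        ≤ ‹MeasurableSpace Ω› := by
    intro i; cases i with
    | inl p => exact measurable_iff_comap_le.mp (M.hZmeas p.1 p.2)
    | inr s => exact measurable_iff_comap_le.mp (M.hεmeas s)
  have hdisj : Disjoint ({Sum.inl (t + 1, j)} : Set ((ℕ × ℕ) ⊕ ℕ))
      {i | Sum.elim (fun p => p.1 ≤ t) (fun s => s ≤ t) i} := by
    simp [Set.disjoint_left]
  have hindep := indep_iSup_of_disjoint h_le hI hdisj
  rw [IndepFun_iff_Indep]
  refine indep_of_indep_of_le_left (indep_of_indep_of_le_right hindep ?_) ?_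
  · exact measurable_iff_comap_le.mp (M.measurable_past_X t)
  · exact le_iSup₂ (f := fun i (_ : i ∈ ({Sum.inl (t + 1, j)} : Set ((ℕ × ℕ) ⊕ ℕ))) =>
      MeasurableSpace.comap
        (Sum.elim (fun p : ℕ × ℕ => M.Z p.1 p.2) M.ε i) inferInstance)
      (Sum.inl (t + 1, j)) rfl

/-- the decrement due to thinning between times `t` and `t+1`. -/
def INAR.d (t : ℕ) (ω : Ω) : ℕ :=
  M.X t ω - ∑ j ∈ Finset.range (M.X t ω), M.Z (t + 1) j ω

lemma INAR.sumZ_le (t : ℕ) (ω : Ω) :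
    ∑ j ∈ Finset.range (M.X t ω), M.Z (t + 1) j ω ≤ M.X t ω := by
  calc ∑ j ∈ Finset.range (M.X t ω), M.Z (t + 1) j ω
      ≤ ∑ _j ∈ Finset.range (M.X t ω), 1 :=
        Finset.sum_le_sum fun j _ => M.hZle (t + 1) j ω
    _ = M.X t ω := by simp

lemma INAR.measd (t : ℕ) : Measurable (M.d t) := by
  have h : Measurable fun ω => ∑ j ∈ Finset.range (M.X t ω), M.Z (t + 1) j ω :=
    aux_comp_meas (M.measX t) (g := fun N ω => ∑ j ∈ Finset.range N, M.Z (t + 1) j ω)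
      fun N => Finset.measurable_sum _ fun j _ => M.hZmeas _ _
  exact (M.measX t).sub h

lemma INAR.key_identity (n : ℕ) (ω : Ω) :
    M.X n ω + ∑ t ∈ Finset.range n, M.d t ω = ∑ t ∈ Finset.range n, M.ε (t + 1) ω := by
  induction n with
  | zero => simp [M.hX0]
  | succ n ih =>
    have hle := M.sumZ_le n ω
    have hrec := M.hXrec n ω
    have hd : M.d n ω = M.X n ω - ∑ j ∈ Finset.range (M.X n ω), M.Z (n + 1) j ω := rfl
    rw [Finset.sum_range_succ, Finset.sum_range_succ]
    omega

lemma INAR.X_le_sum_eps (n : ℕ) (ω : Ω) :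
    M.X n ω ≤ ∑ t ∈ Finset.range n, M.ε (t + 1) ω :=
  le_trans (Nat.le_add_right _ _) (le_of_eq (M.key_identity n ω))

lemma INAR.map_eps (t : ℕ) : Measure.map (M.ε t) P = G.toMeasure := by
  ext s hs
  rw [Measure.map_apply (M.hεmeas t) hs, PMF.toMeasure_apply _ _]
  have hsets : M.ε t ⁻¹' s = ⋃ k ∈ s, M.ε t ⁻¹' {k} := by
    ext ω; simp
  rw [hsets, measure_biUnion (Set.to_countable s)
    (fun i _ j _ hij => Set.disjoint_left.mpr fun ω hωi hωj => hij (by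
      simp only [Set.mem_preimage, Set.mem_singleton_iff] at hωi hωj
      rw [← hωi, ← hωj]))
    (fun k _ => M.hεmeas t (measurableSet_singleton k))]
  rw [← _root_.tsum_subtype]
  exact tsum_congr fun k => M.hεdist t k
  exact hs

lemma INAR.lint_eps (t : ℕ) :
    ∫⁻ ω, (M.ε t ω : ℝ≥0∞) ∂P = ∑' k : ℕ, (k : ℝ≥0∞) * G k := by
  have h : ∫⁻ ω, (M.ε t ω : ℝ≥0∞) ∂P
      = ∫⁻ k, (k : ℝ≥0∞) ∂(Measure.map (M.ε t) P) :=
    (lintegral_map measurable_from_top (M.hεmeas t)).symm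
  rw [h, M.map_eps, lintegral_countable']
  exact tsum_congr fun k => by
    rw [PMF.toMeasure_apply_singleton _ _ (measurableSet_singleton _)]

lemma INAR.lint_X_eq_tsum (t : ℕ) :
    ∫⁻ ω, (M.X t ω : ℝ≥0∞) ∂P = ∑' j, P {ω | j < M.X t ω} := by
  have hmeas : ∀ j : ℕ, MeasurableSet {ω | j < M.X t ω} := fun j =>
    M.measX t measurableSet_Ioi
  have hpt : ∀ ω, (M.X t ω : ℝ≥0∞)
      = ∑' j, Set.indicator {ω' | j < M.X t ω'} (fun _ => (1 : ℝ≥0∞)) ω := by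
    intro ω
    have hval : ∀ j, Set.indicator {ω' | j < M.X t ω'} (fun _ => (1 : ℝ≥0∞)) ω
        = if j < M.X t ω then 1 else 0 := fun j => by simp [Set.indicator_apply]
    simp_rw [hval]
    rw [tsum_eq_sum (s := Finset.range (M.X t ω)) (fun j hj => by
      simp only [Finset.mem_range, not_lt] at hj
      simp [Nat.not_lt.mpr hj])]
    rw [Finset.sum_congr rfl fun j hj => if_pos (Finset.mem_range.mp hj)]
    simp
  calc ∫⁻ ω, (M.X t ω : ℝ≥0∞) ∂P
      = ∫⁻ ω, ∑' j, Set.indicator {ω' | j < M.X t ω'} (fun _ => (1 : ℝ≥0∞)) ω ∂P :=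
        lintegral_congr hpt
    _ = ∑' j, ∫⁻ ω, Set.indicator {ω' | j < M.X t ω'} (fun _ => (1 : ℝ≥0∞)) ω ∂P :=
        lintegral_tsum fun j => (measurable_const.indicator (hmeas j)).aemeasurable
    _ = ∑' j, P {ω | j < M.X t ω} :=
        tsum_congr fun j => lintegral_indicator_one (hmeas j)

lemma INAR.lint_X_le (t : ℕ) :
    ∫⁻ ω, (M.X t ω : ℝ≥0∞) ∂P ≤ t * ∑' k : ℕ, (k : ℝ≥0∞) * G k := by
  calc ∫⁻ ω, (M.X t ω : ℝ≥0∞) ∂P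
      ≤ ∫⁻ ω, ∑ s ∈ Finset.range t, (M.ε (s + 1) ω : ℝ≥0∞) ∂P := by
        refine lintegral_mono fun ω => ?_
        calc (M.X t ω : ℝ≥0∞)
            ≤ ((∑ s ∈ Finset.range t, M.ε (s + 1) ω : ℕ) : ℝ≥0∞) :=
              Nat.cast_le.mpr (M.X_le_sum_eps t ω)
          _ = ∑ s ∈ Finset.range t, (M.ε (s + 1) ω : ℝ≥0∞) := Nat.cast_sum _ _
    _ = ∑ s ∈ Finset.range t, ∫⁻ ω, (M.ε (s + 1) ω : ℝ≥0∞) ∂P :=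
        lintegral_finset_sum _ fun s _ => measurable_from_top.comp (M.hεmeas (s + 1))
    _ = t * ∑' k : ℕ, (k : ℝ≥0∞) * G k := by
        simp [M.lint_eps]

lemma INAR.lint_d (t : ℕ) :
    ∫⁻ ω, (M.d t ω : ℝ≥0∞) ∂P
      = (1 - ENNReal.ofReal θ) * ∫⁻ ω, (M.X t ω : ℝ≥0∞) ∂P := by
  have hmeas : ∀ j : ℕ, MeasurableSet {ω | j < M.X t ω} := fun j =>
    M.measX t measurableSet_Ioi
  have hZ01 : ∀ j ω, M.Z (t + 1) j ω = 0 ∨ M.Z (t + 1) j ω = 1 := fun j ω =>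
    Nat.le_one_iff_eq_zero_or_eq_one.mp (M.hZle (t + 1) j ω)
  have hpt : ∀ ω, (M.d t ω : ℝ≥0∞) = ∑' j,
      Set.indicator {ω' | j < M.X t ω'} (fun _ => (1 : ℝ≥0∞)) ω
        * ((1 - M.Z (t + 1) j ω : ℕ) : ℝ≥0∞) := by
    intro ω
    have hd : M.d t ω = ∑ j ∈ Finset.range (M.X t ω), (1 - M.Z (t + 1) j ω) := by
      have h1 : ∑ j ∈ Finset.range (M.X t ω), (1 - M.Z (t + 1) j ω)
          + ∑ j ∈ Finset.range (M.X t ω), M.Z (t + 1) j ω = M.X t ω := by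
        rw [← Finset.sum_add_distrib]
        have hone : ∀ j ∈ Finset.range (M.X t ω),
            (1 - M.Z (t + 1) j ω) + M.Z (t + 1) j ω = 1 := fun j _ => by
          have := M.hZle (t + 1) j ω; omega
        rw [Finset.sum_congr rfl hone]
        simp
      have h2 := M.sumZ_le t ω
      have h3 : M.d t ω
          = M.X t ω - ∑ j ∈ Finset.range (M.X t ω), M.Z (t + 1) j ω := rfl
      omega
    have hval : ∀ j, Set.indicator {ω' | j < M.X t ω'} (fun _ => (1 : ℝ≥0∞)) ω
        * ((1 - M.Z (t + 1) j ω : ℕ) : ℝ≥0∞)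
        = if j < M.X t ω then ((1 - M.Z (t + 1) j ω : ℕ) : ℝ≥0∞) else 0 := fun j => by
      by_cases hj : j < M.X t ω <;> simp [Set.indicator_apply, hj]
    simp_rw [hval]
    rw [tsum_eq_sum (s := Finset.range (M.X t ω)) (fun j hj => by
      simp only [Finset.mem_range, not_lt] at hj
      simp [Nat.not_lt.mpr hj])]
    rw [Finset.sum_congr rfl fun j hj => if_pos (Finset.mem_range.mp hj)]
    rw [hd]
    exact Nat.cast_sum _ _
  rw [lintegral_congr hpt]
  have haem : ∀ j : ℕ, AEMeasurable (fun ω =>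
      Set.indicator {ω' | j < M.X t ω'} (fun _ => (1 : ℝ≥0∞)) ω
        * ((1 - M.Z (t + 1) j ω : ℕ) : ℝ≥0∞)) P := fun j =>
    ((measurable_const.indicator (hmeas j)).mul
      (Measurable.comp (g := fun z : ℕ => ((1 - z : ℕ) : ℝ≥0∞)) measurable_from_top
        (M.hZmeas (t + 1) j))).aemeasurable
  rw [lintegral_tsum haem]
  have hterm : ∀ j : ℕ, ∫⁻ ω,
      Set.indicator {ω' | j < M.X t ω'} (fun _ => (1 : ℝ≥0∞)) ω
        * ((1 - M.Z (t + 1) j ω : ℕ) : ℝ≥0∞) ∂P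
      = P {ω | j < M.X t ω} * (1 - ENNReal.ofReal θ) := by
    intro j
    have hind : IndepFun
        (fun ω => Set.indicator {ω' | j < M.X t ω'} (fun _ => (1 : ℝ≥0∞)) ω)
        (fun ω => ((1 - M.Z (t + 1) j ω : ℕ) : ℝ≥0∞)) P := by
      have h := (M.indep_ZX t j).symm
      have h2 := h.comp (φ := fun N : ℕ => if j < N then (1 : ℝ≥0∞) else 0)
        (ψ := fun z : ℕ => ((1 - z : ℕ) : ℝ≥0∞)) measurable_from_top measurable_from_top
      have heq : (fun ω => Set.indicator {ω' | j < M.X t ω'} (fun _ => (1 : ℝ≥0∞)) ω)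
          = (fun N : ℕ => if j < N then (1 : ℝ≥0∞) else 0) ∘ M.X t :=
        funext fun ω => by simp [Set.indicator_apply, Function.comp]
      rw [heq]
      exact h2
    have hmul := lintegral_mul_eq_lintegral_mul_lintegral_of_indepFun
      (μ := P)
      (f := fun ω => Set.indicator {ω' | j < M.X t ω'} (fun _ => (1 : ℝ≥0∞)) ω)
      (g := fun ω => ((1 - M.Z (t + 1) j ω : ℕ) : ℝ≥0∞))
      (measurable_const.indicator (hmeas j))
      (Measurable.comp (g := fun z : ℕ => ((1 - z : ℕ) : ℝ≥0∞)) measurable_from_top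
        (M.hZmeas (t + 1) j)) hind
    have : ∫⁻ ω, Set.indicator {ω' | j < M.X t ω'} (fun _ => (1 : ℝ≥0∞)) ω
        * ((1 - M.Z (t + 1) j ω : ℕ) : ℝ≥0∞) ∂P
        = (∫⁻ ω, Set.indicator {ω' | j < M.X t ω'} (fun _ => (1 : ℝ≥0∞)) ω ∂P)
          * ∫⁻ ω, ((1 - M.Z (t + 1) j ω : ℕ) : ℝ≥0∞) ∂P := hmul
    have hI1 : ∀ (u : Set Ω), MeasurableSet u →
        ∫⁻ ω, Set.indicator u (fun _ => (1 : ℝ≥0∞)) ω ∂P = P u := fun u hu =>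
      lintegral_indicator_one hu
    rw [this, hI1 _ (hmeas j)]
    congr 1
    have hB : (fun ω => ((1 - M.Z (t + 1) j ω : ℕ) : ℝ≥0∞))
        = fun ω => Set.indicator {ω' | M.Z (t + 1) j ω' = 0} (fun _ => (1 : ℝ≥0∞)) ω :=
      funext fun ω => by
        rcases hZ01 j ω with hz | hz <;> simp [hz, Set.indicator_apply]
    rw [hB, hI1 {ω' | M.Z (t + 1) j ω' = 0} (M.hZmeas (t + 1) j (measurableSet_singleton 0))]
    have hset : {ω | M.Z (t + 1) j ω = 0} = {ω | M.Z (t + 1) j ω = 1}ᶜ := by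
      ext ω; have := M.hZle (t + 1) j ω
      simp only [Set.mem_setOf_eq, Set.mem_compl_iff]
      omega
    rw [hset, prob_compl_eq_one_sub (s := {ω | M.Z (t + 1) j ω = 1})
      (M.hZmeas (t + 1) j (measurableSet_singleton 1)),
      M.hZdist]
  rw [tsum_congr hterm, ENNReal.tsum_mul_right, M.lint_X_eq_tsum, mul_comm]

lemma INAR.indep_eps_real (s t : ℕ) (hst : s ≠ t) :
    IndepFun (fun ω => (M.ε s ω : ℝ)) (fun ω => (M.ε t ω : ℝ)) P := by
  have hmeas : ∀ i : (ℕ × ℕ) ⊕ ℕ,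
      Measurable (Sum.elim (fun p : ℕ × ℕ => M.Z p.1 p.2) M.ε i) := by
    intro i; cases i with
    | inl p => exact M.hZmeas p.1 p.2
    | inr u => exact M.hεmeas u
  have h := M.hIndep.indepFun (i := Sum.inr s) (j := Sum.inr t) (by simp [hst])
  exact h.comp (measurable_from_top (f := fun k : ℕ => (k : ℝ)))
    (measurable_from_top (f := fun k : ℕ => (k : ℝ)))

lemma INAR.integrable_eps_fun (t : ℕ) {f : ℕ → ℝ}
    (hs : Summable fun k : ℕ => |f k| * (G k).toReal) :
    Integrable (fun ω => f (M.ε t ω)) P := by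
  have h1 : Integrable f G.toMeasure := pmf_integrable hs
  rw [← M.map_eps t] at h1
  exact (integrable_map_measure measurable_from_top.aestronglyMeasurable
    (M.hεmeas t).aemeasurable).mp h1

lemma INAR.integral_eps_fun (t : ℕ) {f : ℕ → ℝ}
    (hs : Summable fun k : ℕ => |f k| * (G k).toReal) :
    ∫ ω, f (M.ε t ω) ∂P = ∑' k, f k * (G k).toReal := by
  have h1 : ∫ ω, f (M.ε t ω) ∂P = ∫ k, f k ∂(Measure.map (M.ε t) P) :=
    (integral_map (M.hεmeas t).aemeasurable
      measurable_from_top.aestronglyMeasurable).symm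
  rw [h1, M.map_eps, pmf_integral hs]

lemma INAR.integral_eps (t : ℕ) {μG : ℝ}
    (hμ : HasSum (fun k : ℕ => (k : ℝ) * (G k).toReal) μG) :
    ∫ ω, (M.ε t ω : ℝ) ∂P = μG := by
  have hs : Summable fun k : ℕ => |(k : ℝ)| * (G k).toReal := by
    refine hμ.summable.congr fun k => ?_
    rw [abs_of_nonneg (Nat.cast_nonneg k)]
  rw [M.integral_eps_fun t hs, ← hμ.tsum_eq]

lemma INAR.memLp_eps (t : ℕ)
    (hs2 : Summable fun k : ℕ => (k : ℝ) ^ 2 * (G k).toReal) :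
    MemLp (fun ω => (M.ε t ω : ℝ)) 2 P := by
  refine (memLp_two_iff_integrable_sq
    ((measurable_from_top (f := fun k : ℕ => (k : ℝ))).comp
      (M.hεmeas t)).aestronglyMeasurable).mpr ?_
  have hs : Summable fun k : ℕ => |(k : ℝ) ^ 2| * (G k).toReal := by
    refine hs2.congr fun k => ?_
    rw [abs_of_nonneg (sq_nonneg _)]
  exact M.integrable_eps_fun t hs

lemma INAR.variance_eps (t : ℕ) {μG m2 : ℝ}
    (hμ : HasSum (fun k : ℕ => (k : ℝ) * (G k).toReal) μG)
    (h2 : HasSum (fun k : ℕ => (k : ℝ) ^ 2 * (G k).toReal) m2) :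
    variance (fun ω => (M.ε t ω : ℝ)) P = m2 - μG ^ 2 := by
  rw [variance_eq_sub (M.memLp_eps t h2.summable)]
  have hsq : ∫ ω, ((fun ω => (M.ε t ω : ℝ)) ^ 2) ω ∂P = m2 := by
    have hs : Summable fun k : ℕ => |(k : ℝ) ^ 2| * (G k).toReal := by
      refine h2.summable.congr fun k => ?_
      rw [abs_of_nonneg (sq_nonneg _)]
    have := M.integral_eps_fun t hs
    simp only [Pi.pow_apply]
    rw [show (∫ ω, (M.ε t ω : ℝ) ^ 2 ∂P) = ∫ ω, (fun k : ℕ => (k : ℝ) ^ 2) (M.ε t ω) ∂P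
      from rfl, this, ← h2.tsum_eq]
  rw [hsq, M.integral_eps t hμ]

end Aux

/-- Consistent estimation of the innovation mean in the nearly unstable
INAR(1) model: `μ̂_{G,n} = X_n / n → μG` in probability under `P_{1-h/n²}`. -/
theorem inar_estimate_mean
    {Ω : ℕ → Type} [∀ n, MeasurableSpace (Ω n)] (P : ∀ n, Measure (Ω n))
    [∀ n, IsProbabilityMeasure (P n)] (h : ℝ) (hh : 0 ≤ h) (G : PMF ℕ)
    (M : ∀ n, INAR (P n) (1 - h / (n : ℝ) ^ 2) G) (μG σ2 : ℝ)
    (hμ : HasSum (fun k : ℕ => (k : ℝ) * (G k).toReal) μG)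
    (hσ : HasSum (fun k : ℕ => ((k : ℝ) - μG) ^ 2 * (G k).toReal) σ2) :
    ∀ δ : ℝ, 0 < δ →
      Filter.Tendsto
        (fun n : ℕ =>
          ((P n) {ω | δ ≤ |((M n).X n ω : ℝ) / n - μG|}).toReal)
        Filter.atTop (nhds 0) := by
  intro δ hδ
  have hGtop : ∀ k, G k ≠ ⊤ := fun k => PMF.apply_ne_top G k
  have hμ0 : 0 ≤ μG :=
    hμ.nonneg fun k => mul_nonneg (Nat.cast_nonneg k) ENNReal.toReal_nonneg
  have hσ0 : 0 ≤ σ2 :=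
    hσ.nonneg fun k => mul_nonneg (sq_nonneg _) ENNReal.toReal_nonneg
  -- the pmf sums to one (in ℝ)
  have hGsum : Summable fun k : ℕ => (G k).toReal :=
    ENNReal.summable_toReal (by rw [G.tsum_coe]; exact ENNReal.one_ne_top)
  have hg1 : HasSum (fun k : ℕ => (G k).toReal) 1 := by
    have ht : ∑' k, (G k).toReal = 1 := by
      rw [← ENNReal.tsum_toReal_eq hGtop, G.tsum_coe, ENNReal.toReal_one]
    exact ht ▸ hGsum.hasSum
  -- second moment
  have h2 : HasSum (fun k : ℕ => (k : ℝ) ^ 2 * (G k).toReal)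
      (σ2 + 2 * μG * μG + -(μG ^ 2) * 1) := by
    have hcomb := (hσ.add (hμ.mul_left (2 * μG))).add (hg1.mul_left (-(μG ^ 2)))
    have heq : (fun k : ℕ => (k : ℝ) ^ 2 * (G k).toReal)
        = fun k : ℕ => (((k : ℝ) - μG) ^ 2 * (G k).toReal
            + 2 * μG * ((k : ℝ) * (G k).toReal)) + -(μG ^ 2) * (G k).toReal :=
      funext fun k => by ring
    rw [heq]
    exact hcomb
  -- the ENNReal innovation mean
  have hμbar : (∑' k : ℕ, (k : ℝ≥0∞) * G k) = ENNReal.ofReal μG := by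
    rw [← hμ.tsum_eq, ENNReal.ofReal_tsum_of_nonneg
      (fun k => mul_nonneg (Nat.cast_nonneg k) ENNReal.toReal_nonneg) hμ.summable]
    exact (tsum_congr fun k => by
      rw [ENNReal.ofReal_mul (Nat.cast_nonneg k), ENNReal.ofReal_natCast,
        ENNReal.ofReal_toReal (hGtop k)]).symm
  set C : ℝ := 4 * σ2 / δ ^ 2 + 2 * (h * μG) / δ with hC
  have key : ∀ n : ℕ, 1 ≤ n →
      ((P n) {ω | δ ≤ |((M n).X n ω : ℝ) / n - μG|}).toReal ≤ C / n := by
    intro n hn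
    have hn0 : (0 : ℝ) < n := by exact_mod_cast hn
    set Mn := M n with hMn
    set S : Ω n → ℝ := ∑ t ∈ Finset.range n, (fun ω => (Mn.ε (t + 1) ω : ℝ)) with hS
    set D : Ω n → ℕ := fun ω => ∑ t ∈ Finset.range n, Mn.d t ω with hD
    have hSapp : ∀ ω, S ω = ∑ t ∈ Finset.range n, (Mn.ε (t + 1) ω : ℝ) := fun ω => by
      rw [hS, Finset.sum_apply]
    have habs : Summable fun k : ℕ => |(k : ℝ)| * (G k).toReal :=
      hμ.summable.congr fun k => by rw [abs_of_nonneg (Nat.cast_nonneg k)]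
    have hint : ∀ t : ℕ, Integrable (fun ω => (Mn.ε t ω : ℝ)) (P n) := fun t =>
      Mn.integrable_eps_fun t habs
    have hES : ∫ ω, S ω ∂(P n) = n * μG := by
      have h1 : ∫ ω, S ω ∂(P n)
          = ∫ ω, ∑ t ∈ Finset.range n, (Mn.ε (t + 1) ω : ℝ) ∂(P n) := by
        congr 1; exact funext hSapp
      rw [h1, integral_finset_sum _ fun t _ => hint (t + 1)]
      rw [Finset.sum_congr rfl fun t _ => Mn.integral_eps (t + 1) hμ]
      simp [mul_comm]
    have hMem : MemLp S 2 (P n) :=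
      memLp_finset_sum' _ fun t _ => Mn.memLp_eps (t + 1) h2.summable
    have hvarS : variance S (P n) = n * σ2 := by
      rw [hS, IndepFun.variance_sum (fun t _ => Mn.memLp_eps (t + 1) h2.summable)
        (fun t _ u _ htu => Mn.indep_eps_real (t + 1) (u + 1) (by omega))]
      rw [Finset.sum_congr rfl fun t _ => Mn.variance_eps (t + 1) hμ h2]
      simp only [Finset.sum_const, Finset.card_range, nsmul_eq_mul]
      ring
    -- Chebyshev
    have hcheb := meas_ge_le_variance_div_sq (μ := P n) hMem
      (c := (n : ℝ) * δ / 2) (by positivity)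
    rw [hES, hvarS] at hcheb
    have hchebval : ENNReal.ofReal ((n : ℝ) * σ2 / ((n : ℝ) * δ / 2) ^ 2)
        = ENNReal.ofReal (4 * σ2 / δ ^ 2 / n) := by
      congr 1
      field_simp
      ring
    rw [hchebval] at hcheb
    -- Markov for the thinning decrement
    set B : Set (Ω n) := {ω | (n : ℝ) * δ / 2 ≤ (D ω : ℝ)} with hB
    have hq : 1 - ENNReal.ofReal (1 - h / (n : ℝ) ^ 2)
        ≤ ENNReal.ofReal (h / (n : ℝ) ^ 2) := by
      by_cases hθ : 0 ≤ 1 - h / (n : ℝ) ^ 2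
      · have heq : ENNReal.ofReal (h / (n : ℝ) ^ 2)
            = ENNReal.ofReal 1 - ENNReal.ofReal (1 - h / (n : ℝ) ^ 2) := by
          rw [← ENNReal.ofReal_sub _ hθ]
          norm_num
        rw [heq, ENNReal.ofReal_one]
      · push_neg at hθ
        have h1 : (1 : ℝ) < h / (n : ℝ) ^ 2 := by linarith
        exact le_trans tsub_le_self (ENNReal.one_le_ofReal.mpr h1.le)
    have hlintd : ∀ t : ℕ, t ≤ n → ∫⁻ ω, (Mn.d t ω : ℝ≥0∞) ∂(P n)
        ≤ ENNReal.ofReal (h / (n : ℝ) ^ 2) * ((n : ℝ≥0∞) * ENNReal.ofReal μG) := by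
      intro t ht
      rw [Mn.lint_d t]
      refine mul_le_mul' hq ?_
      refine le_trans (Mn.lint_X_le t) ?_
      rw [hμbar]
      exact mul_le_mul' (Nat.cast_le.mpr ht) le_rfl
    have hlD : ∫⁻ ω, (D ω : ℝ≥0∞) ∂(P n) ≤ ENNReal.ofReal (h * μG) := by
      have h1 : ∀ ω, ((D ω : ℕ) : ℝ≥0∞) = ∑ t ∈ Finset.range n, (Mn.d t ω : ℝ≥0∞) :=
        fun ω => by rw [hD]; exact Nat.cast_sum _ _
      have hdm : ∀ t ∈ Finset.range n, Measurable fun ω => ((Mn.d t ω : ℕ) : ℝ≥0∞) :=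
        fun t _ => Measurable.comp (g := fun m : ℕ => (m : ℝ≥0∞)) measurable_from_top
          (Mn.measd t)
      rw [lintegral_congr h1, lintegral_finset_sum _ hdm]
      calc ∑ t ∈ Finset.range n, ∫⁻ ω, (Mn.d t ω : ℝ≥0∞) ∂(P n)
          ≤ ∑ _t ∈ Finset.range n,
            ENNReal.ofReal (h / (n : ℝ) ^ 2) * ((n : ℝ≥0∞) * ENNReal.ofReal μG) :=
            Finset.sum_le_sum fun t htmem =>
              hlintd t (Nat.le_of_lt (Finset.mem_range.mp htmem))
        _ = (n : ℝ≥0∞) * (ENNReal.ofReal (h / (n : ℝ) ^ 2)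
              * ((n : ℝ≥0∞) * ENNReal.ofReal μG)) := by
            simp [Finset.sum_const, Finset.card_range, nsmul_eq_mul]
        _ = ENNReal.ofReal ((n : ℝ) * (h / (n : ℝ) ^ 2 * ((n : ℝ) * μG))) := by
            rw [ENNReal.ofReal_mul (by positivity), ENNReal.ofReal_mul (by positivity),
              ENNReal.ofReal_mul (by positivity), ENNReal.ofReal_natCast]
        _ = ENNReal.ofReal (h * μG) := by
            congr 1
            field_simp
    have hmarkov : (P n) B ≤ ENNReal.ofReal (2 * (h * μG) / ((n : ℝ) * δ)) := by
      have hmeasD : Measurable fun ω => ((D ω : ℕ) : ℝ≥0∞) :=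
        Measurable.comp (g := fun m : ℕ => (m : ℝ≥0∞)) measurable_from_top
          (Finset.measurable_sum _ fun t _ => Mn.measd t)
      have h1 := mul_meas_ge_le_lintegral₀ (μ := P n) hmeasD.aemeasurable
        (ENNReal.ofReal ((n : ℝ) * δ / 2))
      have hseteq : {ω | ENNReal.ofReal ((n : ℝ) * δ / 2) ≤ ((D ω : ℕ) : ℝ≥0∞)} = B := by
        ext ω
        rw [hB, Set.mem_setOf_eq, Set.mem_setOf_eq,
          show ((D ω : ℕ) : ℝ≥0∞) = ENNReal.ofReal ((D ω : ℕ) : ℝ) by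
            rw [ENNReal.ofReal_natCast]]
        exact ENNReal.ofReal_le_ofReal_iff (Nat.cast_nonneg _)
      rw [hseteq] at h1
      have ha0 : ENNReal.ofReal ((n : ℝ) * δ / 2) ≠ 0 := by
        simp only [ne_eq, ENNReal.ofReal_eq_zero, not_le]
        positivity
      have hatop : ENNReal.ofReal ((n : ℝ) * δ / 2) ≠ ⊤ := ENNReal.ofReal_ne_top
      have h2 : (P n) B
          ≤ (∫⁻ ω, ((D ω : ℕ) : ℝ≥0∞) ∂(P n)) / ENNReal.ofReal ((n : ℝ) * δ / 2) :=
        (ENNReal.le_div_iff_mul_le (Or.inl ha0) (Or.inl hatop)).mpr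
          (by rwa [mul_comm])
      refine le_trans h2 ?_
      calc (∫⁻ ω, ((D ω : ℕ) : ℝ≥0∞) ∂(P n)) / ENNReal.ofReal ((n : ℝ) * δ / 2)
          ≤ ENNReal.ofReal (h * μG) / ENNReal.ofReal ((n : ℝ) * δ / 2) := by
            gcongr
        _ = ENNReal.ofReal (h * μG / ((n : ℝ) * δ / 2)) :=
            (ENNReal.ofReal_div_of_pos (by positivity)).symm
        _ = ENNReal.ofReal (2 * (h * μG) / ((n : ℝ) * δ)) := by
            congr 1
            field_simp
    -- inclusion of events
    have hincl : {ω | δ ≤ |((Mn.X n ω : ℝ)) / n - μG|}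
        ⊆ {ω | (n : ℝ) * δ / 2 ≤ |S ω - (n : ℝ) * μG|} ∪ B := by
      intro ω hω
      by_contra hc
      simp only [Set.mem_union, not_or] at hc
      obtain ⟨hA, hBc⟩ := hc
      rw [Set.mem_setOf_eq, not_le] at hA
      rw [hB, Set.mem_setOf_eq, not_le] at hBc
      rw [Set.mem_setOf_eq] at hω
      have hXid : (Mn.X n ω : ℝ) = S ω - (D ω : ℝ) := by
        have hnat := Mn.key_identity n ω
        have hcast : (Mn.X n ω : ℝ) + (D ω : ℝ) = S ω := by
          rw [hSapp, hD]
          exact_mod_cast congrArg (fun m : ℕ => (m : ℝ)) hnat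
        linarith
      have habs1 : |((Mn.X n ω : ℝ)) / n - μG| < δ := by
        rw [hXid]
        have hrw : (S ω - (D ω : ℝ)) / n - μG
            = (S ω - n * μG) / n - (D ω : ℝ) / n := by
          field_simp
          ring
        rw [hrw]
        have hb1 : |(S ω - n * μG) / n| < δ / 2 := by
          rw [abs_div, abs_of_nonneg hn0.le, div_lt_iff₀ hn0]
          calc |S ω - ↑n * μG| < ↑n * δ / 2 := hA
            _ = δ / 2 * ↑n := by ring
        have hb2 : |(D ω : ℝ) / n| < δ / 2 := by
          rw [abs_div, abs_of_nonneg hn0.le, abs_of_nonneg (Nat.cast_nonneg _),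
            div_lt_iff₀ hn0]
          calc ((D ω : ℕ) : ℝ) < ↑n * δ / 2 := hBc
            _ = δ / 2 * ↑n := by ring
        calc |(S ω - ↑n * μG) / ↑n - (D ω : ℝ) / ↑n|
            ≤ |(S ω - ↑n * μG) / ↑n| + |(D ω : ℝ) / ↑n| := abs_sub _ _
          _ < δ / 2 + δ / 2 := add_lt_add hb1 hb2
          _ = δ := by ring
      exact absurd hω (not_le.mpr habs1)
    have htotal : (P n) {ω | δ ≤ |((Mn.X n ω : ℝ)) / n - μG|}
        ≤ ENNReal.ofReal (4 * σ2 / δ ^ 2 / n) + ENNReal.ofReal (2 * (h * μG) / ((n : ℝ) * δ)) :=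
      le_trans (measure_mono hincl)
        (le_trans (measure_union_le _ _) (add_le_add hcheb hmarkov))
    rw [← ENNReal.ofReal_add (by positivity) (by positivity)] at htotal
    have hfinal := ENNReal.toReal_le_of_le_ofReal (by positivity) htotal
    refine le_trans hfinal (le_of_eq ?_)
    rw [hC]
    field_simp
  have hnn : ∀ n : ℕ, 0 ≤ ((P n) {ω | δ ≤ |((M n).X n ω : ℝ) / n - μG|}).toReal :=
    fun n => ENNReal.toReal_nonneg
  refine tendsto_of_tendsto_of_tendsto_of_le_of_le' tendsto_const_nhds
    (tendsto_const_div_atTop_nhds_zero_nat C) (Eventually.of_forall hnn) ?_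
  filter_upwards [eventually_ge_atTop 1] with n hn using key n hn
end
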